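/- arXiv:math/9903079 — 4 statements merged into one kernel-verified Lean document; each statement's English description precedes it below -/
import Mathlib

section
/- Let r ∈ Mat_n(ℂ) ⊗ Mat_n(ℂ) satisfy the classical Yang–Baxter equation [r₁₂,r₁₃] + [r₁₂,r₂₃] + [r₁₃,r₂₃] = 0 (in Mat_n(ℂ)^{⊗3}) and r + r₂₁ = P. Set R = 1 + 2ℏr + 2ℏ²r², a matrix over the polynomial ring ℂ[ℏ]. Then every entry of the matrix R₁₂R₁₃R₂₃ − R₂₃R₁₃R₁₂ is divisible by ℏ³, and every entry of (PR − (1 + ℏ + ℏ²/2))·(PR + (1 − ℏ + ℏ²/2)) is divisible by ℏ³. (That is, R satisfies the quantum Yang–Baxter equation and the Hecke relation (PR − q)(PR + q⁻¹) = 0 with q = e^ℏ, modulo ℏ³.) -/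
namespace GGS0

open Finset Polynomial

noncomputable section

variable {α : Type*} [CommRing α]

/-- Matrix unit `E_{ij}` (ℕ-indices; `0` if out of range). -/
def E (n i j : ℕ) : Matrix (Fin n) (Fin n) α :=
  fun a b => if (a : ℕ) = i ∧ (b : ℕ) = j then 1 else 0

/-- Tensor (Kronecker) product of two `n × n` matrices. -/
def tens {n : ℕ} (A B : Matrix (Fin n) (Fin n) α) :
    Matrix (Fin n × Fin n) (Fin n × Fin n) α :=
  fun p q => A p.1 q.1 * B p.2 q.2

/-- `M₂₁` : swap of the two tensor factors. -/
def swap21 {n : ℕ} (M : Matrix (Fin n × Fin n) (Fin n × Fin n) α) :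
    Matrix (Fin n × Fin n) (Fin n × Fin n) α :=
  fun p q => M (p.2, p.1) (q.2, q.1)

/-- The permutation (Casimir) element `P = Σ E_{ij} ⊗ E_{ji}`. -/
def Pm (n : ℕ) : Matrix (Fin n × Fin n) (Fin n × Fin n) α :=
  ∑ i ∈ range n, ∑ j ∈ range n, tens (E n i j) (E n j i)

/-- `M₁₂ = M ⊗ 1` in the triple tensor product. -/
def lift12 {n : ℕ} (M : Matrix (Fin n × Fin n) (Fin n × Fin n) α) :
    Matrix (Fin n × Fin n × Fin n) (Fin n × Fin n × Fin n) α :=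
  fun p q => M (p.1, p.2.1) (q.1, q.2.1) * (if p.2.2 = q.2.2 then 1 else 0)

/-- `M₁₃`. -/
def lift13 {n : ℕ} (M : Matrix (Fin n × Fin n) (Fin n × Fin n) α) :
    Matrix (Fin n × Fin n × Fin n) (Fin n × Fin n × Fin n) α :=
  fun p q => M (p.1, p.2.2) (q.1, q.2.2) * (if p.2.1 = q.2.1 then 1 else 0)

/-- `M₂₃ = 1 ⊗ M`. -/
def lift23 {n : ℕ} (M : Matrix (Fin n × Fin n) (Fin n × Fin n) α) :
    Matrix (Fin n × Fin n × Fin n) (Fin n × Fin n × Fin n) α :=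
  fun p q => M (p.2.1, p.2.2) (q.2.1, q.2.2) * (if p.1 = q.1 then 1 else 0)

/-! ### Auxiliary lemmas -/

open Matrix Kronecker

lemma Pm_apply {n : ℕ} (p q : Fin n × Fin n) :
    (Pm n : Matrix _ _ α) p q = if q = (p.2, p.1) then 1 else 0 := by
  unfold Pm
  simp only [Matrix.sum_apply]
  unfold tens E
  rw [Finset.sum_eq_single (p.1 : ℕ)]
  · rw [Finset.sum_eq_single (p.2 : ℕ)]
    · simp [Prod.ext_iff, Fin.ext_iff, and_comm, eq_comm]
      split_ifs <;> simp_all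
    · intro b _ hb; simp [hb, eq_comm]
    · intro h; exact absurd (Finset.mem_range.2 p.2.isLt) h
  · intro b _ hb
    apply Finset.sum_eq_zero; intro j _
    simp [hb, eq_comm]
  · intro h; exact absurd (Finset.mem_range.2 p.1.isLt) h

lemma Pm_mul {n : ℕ} (M : Matrix (Fin n × Fin n) (Fin n × Fin n) α) :
    Pm n * M = M.submatrix Prod.swap id := by
  ext p q
  rw [Matrix.mul_apply]
  simp [Pm_apply, ite_mul, Prod.swap]

lemma mul_Pm {n : ℕ} (M : Matrix (Fin n × Fin n) (Fin n × Fin n) α) :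
    M * Pm n = M.submatrix id Prod.swap := by
  ext p q
  rw [Matrix.mul_apply]
  simp only [Pm_apply, mul_ite, mul_one, mul_zero]
  rw [Finset.sum_eq_single (q.2, q.1)] <;> simp [Prod.ext_iff, eq_comm, Prod.swap]
  intro a b h
  intro hb ha
  exact absurd hb (h ha)

lemma Pm_mul_Pm {n : ℕ} : (Pm n : Matrix _ _ α) * Pm n = 1 := by
  ext p q
  rw [Pm_mul]
  simp [Pm_apply, Matrix.one_apply, Prod.ext_iff, eq_comm, and_comm]

lemma Pm_conj {n : ℕ} (M : Matrix (Fin n × Fin n) (Fin n × Fin n) α) :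
    Pm n * M * Pm n = swap21 M := by
  rw [Pm_mul, mul_Pm]
  ext p q
  simp [swap21, Matrix.submatrix, Prod.swap]

def e12 {n : ℕ} : (Fin n × Fin n × Fin n) ≃ ((Fin n × Fin n) × Fin n) :=
  ⟨fun p => ((p.1, p.2.1), p.2.2), fun p => (p.1.1, p.1.2, p.2), fun _ => rfl, fun _ => rfl⟩
def e13 {n : ℕ} : (Fin n × Fin n × Fin n) ≃ ((Fin n × Fin n) × Fin n) :=
  ⟨fun p => ((p.1, p.2.2), p.2.1), fun p => (p.1.1, p.2, p.1.2), fun _ => rfl, fun _ => rfl⟩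

lemma lift12_eq {n : ℕ} (M : Matrix (Fin n × Fin n) (Fin n × Fin n) α) :
    lift12 M = (M ⊗ₖ (1 : Matrix (Fin n) (Fin n) α)).submatrix e12 e12 := by
  ext p q
  simp [lift12, e12, kroneckerMap_apply, Matrix.one_apply, Matrix.submatrix_apply]

lemma lift13_eq {n : ℕ} (M : Matrix (Fin n × Fin n) (Fin n × Fin n) α) :
    lift13 M = (M ⊗ₖ (1 : Matrix (Fin n) (Fin n) α)).submatrix e13 e13 := by
  ext p q
  simp [lift13, e13, kroneckerMap_apply, Matrix.one_apply, Matrix.submatrix_apply]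

lemma lift23_eq {n : ℕ} (M : Matrix (Fin n × Fin n) (Fin n × Fin n) α) :
    lift23 M = ((1 : Matrix (Fin n) (Fin n) α) ⊗ₖ M) := by
  ext p q
  simp [lift23, Matrix.one_apply, mul_comm]

lemma lift12_mul {n : ℕ} (M N : Matrix (Fin n × Fin n) (Fin n × Fin n) α) :
    lift12 (M * N) = lift12 M * lift12 N := by
  have h2 : lift12 M * lift12 N = ((M*N) ⊗ₖ (1 : Matrix (Fin n) (Fin n) α)).submatrix e12 e12 := by
    rw [lift12_eq, lift12_eq, Matrix.submatrix_mul_equiv, ← Matrix.mul_kronecker_mul, one_mul]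
  rw [lift12_eq, h2]

lemma lift13_mul {n : ℕ} (M N : Matrix (Fin n × Fin n) (Fin n × Fin n) α) :
    lift13 (M * N) = lift13 M * lift13 N := by
  have h2 : lift13 M * lift13 N = ((M*N) ⊗ₖ (1 : Matrix (Fin n) (Fin n) α)).submatrix e13 e13 := by
    rw [lift13_eq, lift13_eq, Matrix.submatrix_mul_equiv, ← Matrix.mul_kronecker_mul, one_mul]
  rw [lift13_eq, h2]

lemma lift23_mul {n : ℕ} (M N : Matrix (Fin n × Fin n) (Fin n × Fin n) α) :
    lift23 (M * N) = lift23 M * lift23 N := by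
  rw [lift23_eq, lift23_eq, lift23_eq,
    show ((1 : Matrix (Fin n) (Fin n) α) ⊗ₖ (M*N)) = ((1*1 : Matrix (Fin n) (Fin n) α) ⊗ₖ (M*N)) by rw [one_mul],
    Matrix.mul_kronecker_mul]

lemma lift12_one {n : ℕ} : lift12 (1 : Matrix (Fin n × Fin n) (Fin n × Fin n) α) = 1 := by
  rw [lift12_eq, Matrix.one_kronecker_one, Matrix.submatrix_one_equiv]
lemma lift13_one {n : ℕ} : lift13 (1 : Matrix (Fin n × Fin n) (Fin n × Fin n) α) = 1 := by
  rw [lift13_eq, Matrix.one_kronecker_one, Matrix.submatrix_one_equiv]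
lemma lift23_one {n : ℕ} : lift23 (1 : Matrix (Fin n × Fin n) (Fin n × Fin n) α) = 1 := by
  rw [lift23_eq, Matrix.one_kronecker_one]

lemma lift12_add {n : ℕ} (M N : Matrix (Fin n × Fin n) (Fin n × Fin n) α) :
    lift12 (M + N) = lift12 M + lift12 N := by
  ext p q; simp only [lift12, Matrix.add_apply, add_mul]
lemma lift13_add {n : ℕ} (M N : Matrix (Fin n × Fin n) (Fin n × Fin n) α) :
    lift13 (M + N) = lift13 M + lift13 N := by
  ext p q; simp only [lift13, Matrix.add_apply, add_mul]
lemma lift23_add {n : ℕ} (M N : Matrix (Fin n × Fin n) (Fin n × Fin n) α) :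
    lift23 (M + N) = lift23 M + lift23 N := by
  ext p q; simp only [lift23, Matrix.add_apply, add_mul]

lemma lift12_smul {n : ℕ} (c : α) (M : Matrix (Fin n × Fin n) (Fin n × Fin n) α) :
    lift12 (c • M) = c • lift12 M := by
  ext p q; simp [lift12, mul_assoc]
lemma lift13_smul {n : ℕ} (c : α) (M : Matrix (Fin n × Fin n) (Fin n × Fin n) α) :
    lift13 (c • M) = c • lift13 M := by
  ext p q; simp [lift13, mul_assoc]
lemma lift23_smul {n : ℕ} (c : α) (M : Matrix (Fin n × Fin n) (Fin n × Fin n) α) :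
    lift23 (c • M) = c • lift23 M := by
  ext p q; simp [lift23, mul_assoc]

lemma lift12_map {n : ℕ} (M : Matrix (Fin n × Fin n) (Fin n × Fin n) ℂ) :
    lift12 (M.map (C : ℂ →+* ℂ[X])) = (lift12 M).map C := by
  ext p q; simp [lift12, Matrix.map_apply, apply_ite (C : ℂ →+* ℂ[X])]
lemma lift13_map {n : ℕ} (M : Matrix (Fin n × Fin n) (Fin n × Fin n) ℂ) :
    lift13 (M.map (C : ℂ →+* ℂ[X])) = (lift13 M).map C := by
  ext p q; simp [lift13, Matrix.map_apply, apply_ite (C : ℂ →+* ℂ[X])]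
lemma lift23_map {n : ℕ} (M : Matrix (Fin n × Fin n) (Fin n × Fin n) ℂ) :
    lift23 (M.map (C : ℂ →+* ℂ[X])) = (lift23 M).map C := by
  ext p q; simp [lift23, Matrix.map_apply, apply_ite (C : ℂ →+* ℂ[X])]

lemma Pm_map {n : ℕ} :
    ((Pm n : Matrix (Fin n × Fin n) (Fin n × Fin n) ℂ).map (C : ℂ →+* ℂ[X])) = Pm n := by
  ext p q
  rw [Matrix.map_apply, Pm_apply, Pm_apply, apply_ite (C : ℂ →+* ℂ[X])]
  simp

/-- QYBE key identity (pure algebra). -/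
lemma qybe_identity {m : Type*} [Fintype m] [DecidableEq m] (A B Cc : Matrix m m ℂ[X]) :
    (1 + (2*X:ℂ[X])•A + (2*X^2:ℂ[X])•(A*A)) * ((1 + (2*X:ℂ[X])•B + (2*X^2:ℂ[X])•(B*B))
      * (1 + (2*X:ℂ[X])•Cc + (2*X^2:ℂ[X])•(Cc*Cc)))
    - (1 + (2*X:ℂ[X])•Cc + (2*X^2:ℂ[X])•(Cc*Cc)) * ((1 + (2*X:ℂ[X])•B + (2*X^2:ℂ[X])•(B*B))
      * (1 + (2*X:ℂ[X])•A + (2*X^2:ℂ[X])•(A*A)))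
    = (4*X^2:ℂ[X]) • ((A*B - B*A) + (A*Cc - Cc*A) + (B*Cc - Cc*B))
      + (X^3:ℂ[X]) • (
        (4:ℂ[X])•(A*(A*B) + A*(A*Cc) + A*(B*B) + A*(Cc*Cc) + B*(B*Cc) + B*(Cc*Cc)
          - (Cc*(Cc*B) + Cc*(Cc*A) + Cc*(B*B) + Cc*(A*A) + B*(B*A) + B*(A*A)))
        + (8:ℂ[X])•(A*(B*Cc) - Cc*(B*A))
        + (4*X:ℂ[X])•(A*(A*(B*B)) + A*(A*(Cc*Cc)) + B*(B*(Cc*Cc))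
          - (Cc*(Cc*(B*B)) + Cc*(Cc*(A*A)) + B*(B*(A*A))))
        + (8*X:ℂ[X])•(A*(A*(B*Cc)) + A*(B*(B*Cc)) + A*(B*(Cc*Cc))
          - (Cc*(Cc*(B*A)) + Cc*(B*(B*A)) + Cc*(B*(A*A))))
        + (8*X^2:ℂ[X])•(A*(A*(B*(B*Cc))) + A*(A*(B*(Cc*Cc))) + A*(B*(B*(Cc*Cc)))
          - (Cc*(Cc*(B*(B*A))) + Cc*(Cc*(B*(A*A))) + Cc*(B*(B*(A*A)))))
        + (8*X^3:ℂ[X])•(A*(A*(B*(B*(Cc*Cc)))) - Cc*(Cc*(B*(B*(A*A)))))) := by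
  simp only [mul_add, add_mul, sub_mul, mul_sub, smul_mul_assoc, mul_smul_comm, smul_smul,
    mul_one, one_mul, mul_assoc, smul_add, smul_sub]
  module

/-- Hecke key identity (pure algebra). -/
lemma hecke_identity {m : Type*} [Fintype m] [DecidableEq m] (P u : Matrix m m ℂ[X]) :
    (P * (1 + (2*X:ℂ[X])•u + (2*X^2:ℂ[X])•(u*u)) - ((1 : Polynomial ℂ) + X + C (1/2 : ℂ) * X ^ 2) • 1)
    * (P * (1 + (2*X:ℂ[X])•u + (2*X^2:ℂ[X])•(u*u)) + ((1 : Polynomial ℂ) - X + C (1/2 : ℂ) * X ^ 2) • 1)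
    = (P*P - 1) + (2*X:ℂ[X])•(P*(P*u + u*P - 1))
      + (2*X^2:ℂ[X])•(P*((P*u + u*P - 1)*u) + P*(u*(P*u + u*P - 1)))
      + ((1 - 2*(C (1/2:ℂ)))*X^2:ℂ[X])•1
      + (X^3:ℂ[X]) • (
          (4:ℂ[X])•(P*(u*(P*(u*u))) + P*(u*(u*(P*u))) - P*(u*u))
          + (4*X:ℂ[X])•(P*(u*(u*(P*(u*u)))))
          - ((C (1/2:ℂ) * C (1/2:ℂ))*X:ℂ[X])•1) := by
  simp only [mul_add, add_mul, sub_mul, mul_sub, smul_mul_assoc, mul_smul_comm, smul_smul,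
    mul_one, one_mul, mul_assoc, smul_add, smul_sub]
  module

/-- if `r` satisfies the CYBE and `r + r₂₁ = P`, then
`R = 1 + 2ℏr + 2ℏ²r²` (over `ℂ[ℏ]`) satisfies the QYBE and the Hecke relation
`(PR − q)(PR + q⁻¹) = 0`, `q = e^ℏ`, modulo `ℏ³` (entrywise divisibility by `ℏ³`). -/
theorem stmt_0 {n : ℕ} (hn : 2 ≤ n)
    (r : Matrix (Fin n × Fin n) (Fin n × Fin n) ℂ)
    (hcybe : (lift12 r * lift13 r - lift13 r * lift12 r)
        + (lift12 r * lift23 r - lift23 r * lift12 r)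
        + (lift13 r * lift23 r - lift23 r * lift13 r) = 0)
    (hP : r + swap21 r = Pm n)
    (R : Matrix (Fin n × Fin n) (Fin n × Fin n) (Polynomial ℂ))
    (hR : R = 1 + (C (2 : ℂ) * X) • r.map C + (C (2 : ℂ) * X ^ 2) • (r.map C * r.map C)) :
    (∀ p q, (X ^ 3 : Polynomial ℂ) ∣
      (lift12 R * lift13 R * lift23 R - lift23 R * lift13 R * lift12 R) p q) ∧
    (∀ p q, (X ^ 3 : Polynomial ℂ) ∣
      (((Pm n * R - ((1 : Polynomial ℂ) + X + C (1 / 2 : ℂ) * X ^ 2) • (1 : Matrix (Fin n × Fin n) (Fin n × Fin n) (Polynomial ℂ)))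
        * (Pm n * R + ((1 : Polynomial ℂ) - X + C (1 / 2 : ℂ) * X ^ 2) • (1 : Matrix (Fin n × Fin n) (Fin n × Fin n) (Polynomial ℂ)))
        : Matrix (Fin n × Fin n) (Fin n × Fin n) (Polynomial ℂ)) p q)) := by
  have hC2 : (C (2 : ℂ)) = (2 : ℂ[X]) := map_ofNat _ 2
  set u : Matrix (Fin n × Fin n) (Fin n × Fin n) ℂ[X] := r.map C with hu
  have hR' : R = 1 + (2*X:ℂ[X]) • u + (2*X^2:ℂ[X]) • (u * u) := by
    rw [hR, hC2]
  -- lifted CYBE over ℂ[X]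
  have hcybe' : ((lift12 u * lift13 u - lift13 u * lift12 u)
        + (lift12 u * lift23 u - lift23 u * lift12 u)
        + (lift13 u * lift23 u - lift23 u * lift13 u)) = 0 := by
    have h := congrArg (fun M => (C : ℂ →+* ℂ[X]).mapMatrix M) hcybe
    simp only [map_add, map_sub, _root_.map_mul, map_zero, RingHom.mapMatrix_apply] at h
    simpa only [hu, lift12_map, lift13_map, lift23_map] using h
  -- P r + r P = 1 over ℂ
  have hswap : Pm n * r * Pm n = Pm n - r := by
    rw [Pm_conj, ← hP]; abel
  have hKc : Pm n * r + r * Pm n = (1 : Matrix (Fin n × Fin n) (Fin n × Fin n) ℂ) := by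
    have h1 : Pm n * r * (Pm n * Pm n) = (Pm n - r) * Pm n := by
      rw [← Matrix.mul_assoc, hswap]
    rw [Pm_mul_Pm, Matrix.mul_one] at h1
    rw [h1, Matrix.sub_mul, Pm_mul_Pm]
    abel
  -- over ℂ[X]
  have hK : Pm n * u + u * Pm n = (1 : Matrix (Fin n × Fin n) (Fin n × Fin n) ℂ[X]) := by
    have h := congrArg (fun M => (C : ℂ →+* ℂ[X]).mapMatrix M) hKc
    simp only [map_add, _root_.map_mul, _root_.map_one, RingHom.mapMatrix_apply] at h
    simpa only [hu, Pm_map] using h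
  have hPP : (Pm n : Matrix (Fin n × Fin n) (Fin n × Fin n) ℂ[X]) * Pm n = 1 := Pm_mul_Pm
  constructor
  · -- QYBE part
    have h12 : lift12 R = 1 + (2*X:ℂ[X]) • lift12 u + (2*X^2:ℂ[X]) • (lift12 u * lift12 u) := by
      rw [hR', lift12_add, lift12_add, lift12_one, lift12_smul, lift12_smul, lift12_mul]
    have h13 : lift13 R = 1 + (2*X:ℂ[X]) • lift13 u + (2*X^2:ℂ[X]) • (lift13 u * lift13 u) := by
      rw [hR', lift13_add, lift13_add, lift13_one, lift13_smul, lift13_smul, lift13_mul]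
    have h23 : lift23 R = 1 + (2*X:ℂ[X]) • lift23 u + (2*X^2:ℂ[X]) • (lift23 u * lift23 u) := by
      rw [hR', lift23_add, lift23_add, lift23_one, lift23_smul, lift23_smul, lift23_mul]
    have key := qybe_identity (lift12 u) (lift13 u) (lift23 u)
    rw [hcybe', smul_zero, zero_add] at key
    intro p q
    rw [show lift12 R * lift13 R * lift23 R - lift23 R * lift13 R * lift12 R
        = lift12 R * (lift13 R * lift23 R) - lift23 R * (lift13 R * lift12 R) by
        rw [Matrix.mul_assoc, Matrix.mul_assoc], h12, h13, h23, key]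
    exact Dvd.intro _ (by rw [Matrix.smul_apply, smul_eq_mul])
  · -- Hecke part
    have key := hecke_identity (Pm n) u
    rw [hPP, hK, sub_self] at key
    have hhalf : ((1 - 2*(C (1/2:ℂ)))*X^2 : ℂ[X]) = 0 := by
      rw [show (2:ℂ[X]) = C 2 from hC2.symm, ← C_mul]
      norm_num
    rw [hhalf] at key
    simp only [Matrix.mul_zero, Matrix.zero_mul, mul_zero, zero_mul, smul_zero, zero_smul,
      add_zero, zero_add] at key
    intro p q
    rw [hR', key]
    exact Dvd.intro _ (by rw [Matrix.smul_apply, smul_eq_mul])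

end
end GGS0
end

section
/- Σ_i (a₊ⁱ)² = − Σ_{α ≺← β} sign(α,β)(|α| − 1) e_β ⊗ e_{−α}, the sum on the right being over all pairs of positive roots with α ≺ β and τ reversing orientation (where β = τᵏα for the relevant k). -/
namespace GGS

open Finset
open scoped Classical

noncomputable section

/-- `n × n` complex matrices, `Mat_n(ℂ)`. -/
abbrev MatN (n : ℕ) := Matrix (Fin n) (Fin n) ℂ
/-- `Mat_n(ℂ) ⊗ Mat_n(ℂ)`, realized as matrices indexed by pairs. -/
abbrev MatT (n : ℕ) := Matrix (Fin n × Fin n) (Fin n × Fin n) ℂ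
/-- `Mat_n(ℂ)^{⊗3}`. -/
abbrev MatT3 (n : ℕ) := Matrix (Fin n × Fin n × Fin n) (Fin n × Fin n × Fin n) ℂ

/-- Matrix unit `E_{ij}` (ℕ-indices; `0` if out of range). -/
def E (n i j : ℕ) : MatN n := fun a b => if (a : ℕ) = i ∧ (b : ℕ) = j then 1 else 0

/-- Tensor (Kronecker) product of two `n × n` matrices. -/
def tens {n : ℕ} (A B : MatN n) : MatT n := fun p q => A p.1 q.1 * B p.2 q.2

/-- `M₂₁` : swap of the two tensor factors. -/
def swap21 {n : ℕ} (M : MatT n) : MatT n := fun p q => M (p.2, p.1) (q.2, q.1)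

/-- The permutation (Casimir) element `P = Σ E_{ij} ⊗ E_{ji}`. -/
def Pm (n : ℕ) : MatT n := ∑ i ∈ range n, ∑ j ∈ range n, tens (E n i j) (E n j i)

/-- `P⁰ = Σ E_{ii} ⊗ E_{ii}`. -/
def P0 (n : ℕ) : MatT n := ∑ i ∈ range n, tens (E n i i) (E n i i)

/-- `M₁₂ = M ⊗ 1`. -/
def lift12 {n : ℕ} (M : MatT n) : MatT3 n :=
  fun p q => M (p.1, p.2.1) (q.1, q.2.1) * (if p.2.2 = q.2.2 then 1 else 0)

/-- `M₁₃`. -/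
def lift13 {n : ℕ} (M : MatT n) : MatT3 n :=
  fun p q => M (p.1, p.2.2) (q.1, q.2.2) * (if p.2.1 = q.2.1 then 1 else 0)

/-- `M₂₃ = 1 ⊗ M`. -/
def lift23 {n : ℕ} (M : MatT n) : MatT3 n :=
  fun p q => M (p.2.1, p.2.2) (q.2.1, q.2.2) * (if p.1 = q.1 then 1 else 0)

/-- The quantum Yang–Baxter equation `R₁₂R₁₃R₂₃ = R₂₃R₁₃R₁₂`. -/
def QYBE {n : ℕ} (M : MatT n) : Prop :=
  lift12 M * lift13 M * lift23 M = lift23 M * lift13 M * lift12 M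

/-- The Hecke relation `(PR − q)(PR + q⁻¹) = 0`. -/
def Hecke {n : ℕ} (q : ℝ) (M : MatT n) : Prop :=
  (Pm n * M - (q : ℂ) • (1 : MatT n)) * (Pm n * M + (q : ℂ)⁻¹ • (1 : MatT n)) = 0

/-- Standard basis vector `e_i` of `ℂⁿ` (as a function on indices). -/
def evec (i : ℕ) : ℕ → ℂ := fun k => if k = i then 1 else 0
/-- The root vector `e_i − e_j`. -/
def rvec (i j : ℕ) : ℕ → ℂ := evec i - evec j
/-- The simple root `α_i = e_i − e_{i+1}` (0-based indexing). -/
def svec (i : ℕ) : ℕ → ℂ := rvec i (i + 1)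
/-- The inner product on `ℂⁿ` for which `(e_i)` is orthonormal (restricted to real vectors). -/
def ipn (n : ℕ) (x y : ℕ → ℂ) : ℂ := ∑ k ∈ range n, x k * y k

/-- A Belavin–Drinfeld triple of type `A_{n−1}`; simple roots are indexed `0,…,n−2`
(0-based: index `i` stands for `α_i = e_i − e_{i+1}`). -/
structure BDTriple (n : ℕ) where
  Γ1 : Finset ℕ
  Γ2 : Finset ℕ
  τ : ℕ → ℕ
  mem1 : ∀ i ∈ Γ1, i + 1 < n
  mem2 : ∀ i ∈ Γ2, i + 1 < n
  bij : Set.BijOn τ ↑Γ1 ↑Γ2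
  isometry : ∀ i ∈ Γ1, ∀ j ∈ Γ1, ipn n (svec (τ i)) (svec (τ j)) = ipn n (svec i) (svec j)
  nilp : ∀ i ∈ Γ1, ∃ k ≥ 1, τ^[k] i ∉ Γ1

variable {n : ℕ}

/-- The positive root `e_i − e_j` (`i < j`) lies in `Γ̃₁` (the positive part of `Span Γ₁`). -/
def SpanRoot (T : BDTriple n) (i j : ℕ) : Prop :=
  i < j ∧ ∀ k, i ≤ k → k < j → k ∈ T.Γ1

/-- `q = τ(p)` for positive roots, via the additive extension of `τ` to `Γ̃₁`. -/
def tauStep (T : BDTriple n) (p q : ℕ × ℕ) : Prop :=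
  SpanRoot T p.1 p.2 ∧ q.1 < q.2 ∧ rvec q.1 q.2 = ∑ k ∈ Finset.Ico p.1 p.2, svec (T.τ k)

/-- `q = τᵏ(p)`. -/
def precK (T : BDTriple n) : ℕ → ℕ × ℕ → ℕ × ℕ → Prop
  | 0, p, q => p = q
  | k + 1, p, q => ∃ r, tauStep T p r ∧ precK T k r q

/-- `p ≺ q`, i.e. `q = τᵏ p` for some `k ≥ 1`. -/
def prec (T : BDTriple n) (p q : ℕ × ℕ) : Prop := ∃ k, precK T (k + 1) p q

/-- `p ≺← q` : `q = τᵏ p` and `τᵏ` reverses orientation on `p`. -/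
def RevOri (T : BDTriple n) (p q : ℕ × ℕ) : Prop :=
  ∃ k, precK T (k + 1) p q ∧ T.τ^[k + 1] p.1 = q.2 - 1

/-- `p ≺→ q` : `q = τᵏ p` and `τᵏ` preserves orientation on `p`. -/
def PresOri (T : BDTriple n) (p q : ℕ × ℕ) : Prop :=
  ∃ k, precK T (k + 1) p q ∧ T.τ^[k + 1] p.1 = q.1

/-- `sign(α,β)` : `(−1)^{1−|α|}` in the orientation-reversing case, `1` otherwise. -/
def sgn (T : BDTriple n) (p q : ℕ × ℕ) : ℂ :=
  if RevOri T p q then (-1 : ℂ) ^ (p.2 - p.1 - 1) else 1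

/-- Sum over all pairs of (would-be) positive roots with indices `< n`. -/
def sumRoots (n : ℕ) (f : ℕ × ℕ → ℕ × ℕ → MatT n) : MatT n :=
  ∑ i ∈ range n, ∑ j ∈ range n, ∑ k ∈ range n, ∑ l ∈ range n, f (i, j) (k, l)

/-- `a = Σ_{α≺β} sign(α,β) (e_{−α} ⊗ e_β − e_β ⊗ e_{−α})`. -/
def aMat (T : BDTriple n) : MatT n :=
  sumRoots n fun p q =>
    if prec T p q then
      sgn T p q • (tens (E n p.2 p.1) (E n q.1 q.2) - tens (E n q.1 q.2) (E n p.2 p.1))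
    else 0

/-- `r_s = ½ P⁰ + Σ_{α>0} e_{−α} ⊗ e_α`. -/
def rsMat (n : ℕ) : MatT n :=
  (1 / 2 : ℂ) • P0 n +
    ∑ i ∈ range n, ∑ j ∈ range n, if i < j then tens (E n j i) (E n i j) else 0

/-- `ε = a r_s + r_s a + a²`. -/
def epsMat (T : BDTriple n) : MatT n :=
  aMat T * rsMat n + rsMat n * aMat T + aMat T * aMat T

/-- Entry of a tensor-square matrix, with ℕ indices. -/
def entry (M : MatT n) (a b c d : ℕ) : ℂ :=
  if h : a < n ∧ b < n ∧ c < n ∧ d < n then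
    M (⟨a, h.1⟩, ⟨b, h.2.1⟩) (⟨c, h.2.2.1⟩, ⟨d, h.2.2.2⟩)
  else 0

/-- The coefficient of `e_β ⊗ e_{−α}` in `M` (here `p = α`, `q = β`). -/
def coeffBA (M : MatT n) (p q : ℕ × ℕ) : ℂ := entry M q.1 p.2 q.2 p.1

/-- `q^z = exp(z · ln q)`. -/
def qpow (q : ℝ) (z : ℂ) : ℂ := Complex.exp (z * (Real.log q : ℂ))

/-- The coefficients `K_{α,β}`. -/
def Kc (T : BDTriple n) (p q : ℕ × ℕ) : ℂ :=
  (if p.2 = q.1 then (1 / 2 : ℂ) else 0) - (if q.2 = p.1 then (1 / 2 : ℂ) else 0)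
    + (if ∃ g : ℕ × ℕ, prec T p g ∧ prec T g q ∧ p.2 = g.1 then 1 else 0)
    - (if ∃ g : ℕ × ℕ, prec T p g ∧ prec T g q ∧ g.2 = p.1 then 1 else 0)
    + (if RevOri T p q then 1 - ((p.2 - p.1 : ℕ) : ℂ) else 0)

/-- `Jⁱ = 1 + (q − q⁻¹) Σ_{β = τⁱα} sign(α,β) q^{K_{α,β}} e_β ⊗ e_{−α}`. -/
def Jlevel (q : ℝ) (T : BDTriple n) (i : ℕ) : MatT n :=
  1 + sumRoots n fun p r =>
    if precK T i p r then
      (((q : ℂ) - (q : ℂ)⁻¹) * sgn T p r * qpow q (Kc T p r)) • tens (E n r.1 r.2) (E n p.2 p.1)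
    else 0

/-- `J = J¹ J² ⋯` (levels beyond the maximal power of `τ` contribute the identity). -/
def Jmat (q : ℝ) (T : BDTriple n) : MatT n :=
  ((List.range n).map fun i => Jlevel q T (i + 1)).prod

/-- The standard Drinfeld–Jimbo `R`-matrix `R_s`. -/
def RsQ (n : ℕ) (q : ℝ) : MatT n :=
  (q : ℂ) • P0 n
    + (∑ i ∈ range n, ∑ j ∈ range n, if i ≠ j then tens (E n i i) (E n j j) else 0)
    + ((q : ℂ) - (q : ℂ)⁻¹) •
        (∑ i ∈ range n, ∑ j ∈ range n, if j < i then tens (E n i j) (E n j i) else 0)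

/-- `e_{−α} ∧_c e_β = q^{−c} e_{−α} ⊗ e_β − q^c e_β ⊗ e_{−α}` (`p = α`, `r = β`). -/
def wedgeC {n : ℕ} (q : ℝ) (c : ℂ) (p r : ℕ × ℕ) : MatT n :=
  qpow q (-c) • tens (E n p.2 p.1) (E n r.1 r.2) - qpow q c • tens (E n r.1 r.2) (E n p.2 p.1)

/-- `R̄_GGS = R_s + (q−q⁻¹) Σ_{α≺β} sign(α,β) e_{−α} ∧_{−sign(α,β) ε_{α,β}} e_β`. -/
def RbarGGS (q : ℝ) (T : BDTriple n) : MatT n :=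
  RsQ n q + ((q : ℂ) - (q : ℂ)⁻¹) •
    sumRoots n fun p r =>
      if prec T p r then
        sgn T p r • wedgeC q (-(sgn T p r) * coeffBA (epsMat T) p r) p r
      else 0

/-- `R̄_J = J⁻¹ R_s J₂₁`. -/
def RbarJ (q : ℝ) (T : BDTriple n) : MatT n :=
  (Jmat q T)⁻¹ * RsQ n q * swap21 (Jmat q T)

/-- `q^{r⁰}` for a diagonal⊗diagonal `r⁰`. -/
def qr0 (n : ℕ) (q : ℝ) (r0 : ℕ → ℕ → ℂ) : MatT n :=
  ∑ i ∈ range n, ∑ j ∈ range n, qpow q (r0 i j) • tens (E n i i) (E n j j)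

/-- `R_GGS = q^{r⁰} R̄_GGS q^{r⁰}`. -/
def RGGS (q : ℝ) (T : BDTriple n) (r0 : ℕ → ℕ → ℂ) : MatT n :=
  qr0 n q r0 * RbarGGS q T * qr0 n q r0

/-- `R_J = q^{r⁰} R̄_J q^{r⁰}`. -/
def RJ (q : ℝ) (T : BDTriple n) (r0 : ℕ → ℕ → ℂ) : MatT n :=
  qr0 n q r0 * RbarJ q T * qr0 n q r0

/-- `r⁰ ∈ 𝔥 ∧ 𝔥`, i.e. the coefficient matrix is antisymmetric. -/
def Antisym (n : ℕ) (r0 : ℕ → ℕ → ℂ) : Prop := ∀ i < n, ∀ j < n, r0 i j = -r0 j i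

/-- The Belavin–Drinfeld compatibility equations
`((α − τα) ⊗ 1) r⁰ = ½ ((α + τα) ⊗ 1) P⁰` for all `α ∈ Γ₁`, written componentwise. -/
def Compat (T : BDTriple n) (r0 : ℕ → ℕ → ℂ) : Prop :=
  ∀ s ∈ T.Γ1, ∀ j < n,
    r0 s j - r0 (s + 1) j - r0 (T.τ s) j + r0 (T.τ s + 1) j
      = (1 / 2 : ℂ) *
        ((if j = s then 1 else 0) - (if j = s + 1 then 1 else 0)
          + (if j = T.τ s then 1 else 0) - (if j = T.τ s + 1 then 1 else 0))

/-- `a₊ⁱ` : the part of `a₊` supported on pairs with `β = τⁱα`. -/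
def aPlusLev (T : BDTriple n) (i : ℕ) : MatT n :=
  sumRoots n fun p r =>
    if precK T i p r then (-(sgn T p r)) • tens (E n r.1 r.2) (E n p.2 p.1) else 0

/-- `a₊ = Σ_{α≺β} (−sign(α,β)) e_β ⊗ e_{−α}`. -/
def aPlus (T : BDTriple n) : MatT n :=
  sumRoots n fun p r =>
    if prec T p r then (-(sgn T p r)) • tens (E n r.1 r.2) (E n p.2 p.1) else 0

/-- `a₋ = Σ_{α≺β} sign(α,β) e_{−α} ⊗ e_β`. -/
def aMinus (T : BDTriple n) : MatT n :=
  sumRoots n fun p r =>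
    if prec T p r then sgn T p r • tens (E n p.2 p.1) (E n r.1 r.2) else 0

/-- `P₊ = Σ_{i<j} E_{ij}⊗E_{ji} + ½P⁰`. -/
def PPlus (n : ℕ) : MatT n :=
  (∑ i ∈ range n, ∑ j ∈ range n, if i < j then tens (E n i j) (E n j i) else 0)
    + (1 / 2 : ℂ) • P0 n

/-- `P₋ = Σ_{i>j} E_{ij}⊗E_{ji} + ½P⁰`. -/
def PMinus (n : ℕ) : MatT n :=
  (∑ i ∈ range n, ∑ j ∈ range n, if j < i then tens (E n i j) (E n j i) else 0)
    + (1 / 2 : ℂ) • P0 n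

/-- The matrix `Σ_{i≥j} a₊ⁱa₊ʲ − Σ_{i<j} a₊ⁱa₊ʲ + a₊P₋ + a₋P₊ + P₊a₊ + a₊a₋ − a₋a₊`. -/
def Mmat (T : BDTriple n) : MatT n :=
  (∑ i ∈ range n, ∑ j ∈ range n, if j ≤ i then aPlusLev T (i + 1) * aPlusLev T (j + 1) else 0)
    - (∑ i ∈ range n, ∑ j ∈ range n, if i < j then aPlusLev T (i + 1) * aPlusLev T (j + 1) else 0)
    + aPlus T * PMinus n + aMinus T * PPlus n + PPlus n * aPlus T
    + aPlus T * aMinus T - aMinus T * aPlus T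

/-- `L_{α,β}` : `½` if `α ⋖ β`, `−½` if `α ⋗ β`, `0` otherwise. -/
def Lc (p r : ℕ × ℕ) : ℂ :=
  if p.2 = r.1 then 1 / 2 else if r.2 = p.1 then -(1 / 2) else 0

/-- The part of `M` (viewed on the basis `e_{τα} ⊗ e_{−α}`, `α ∈ Γ̃₁`) supported on
pairs with `α ⋗ τα`. -/
def partGtr (T : BDTriple n) (M : MatT n) : MatT n :=
  sumRoots n fun p r =>
    if tauStep T p r ∧ r.2 = p.1 then coeffBA M p r • tens (E n r.1 r.2) (E n p.2 p.1) else 0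

/-- The part of `M` (viewed on the basis `e_{−α} ⊗ e_{τα}`, `α ∈ Γ̃₁`) supported on
pairs with `α ⋖ τα`. -/
def partLess21 (T : BDTriple n) (M : MatT n) : MatT n :=
  sumRoots n fun p r =>
    if tauStep T p r ∧ p.2 = r.1 then
      entry M p.2 r.1 p.1 r.2 • tens (E n p.2 p.1) (E n r.1 r.2)
    else 0


section Aux
variable {n : ℕ} (T : BDTriple n)

lemma rvec_add_rvec (a b c : ℕ) : rvec a b + rvec b c = rvec a c := by
  unfold rvec; abel

lemma telescope (c L : ℕ) : ∑ k ∈ range L, svec (c + k) = rvec c (c + L) := by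
  induction L with
  | zero => simp [rvec]
  | succ L ih =>
      rw [Finset.sum_range_succ, ih]
      have e : c + (L + 1) = (c + L) + 1 := by omega
      rw [e, ← rvec_add_rvec c (c + L) (c + L + 1)]
      rfl

lemma rvec_inj {a b c d : ℕ} (hab : a < b) (hcd : c < d) (h : rvec a b = rvec c d) :
    a = c ∧ b = d := by
  have ha := congrFun h a
  have hb := congrFun h b
  simp only [rvec, Pi.sub_apply, evec] at ha hb
  split_ifs at ha hb <;> norm_num at ha <;> norm_num at hb <;> omega

lemma ipn_svec {a b : ℕ} (ha : a + 1 < n) (hb : b + 1 < n) :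
    ipn n (svec a) (svec b) =
      (if a = b then 2 else 0) - (if a = b + 1 then 1 else 0) - (if b = a + 1 then 1 else 0) := by
  unfold ipn
  have hsub : ({a, a + 1} : Finset ℕ) ⊆ range n := by
    intro x hx
    simp only [Finset.mem_insert, Finset.mem_singleton] at hx
    rcases hx with h | h <;> simp [Finset.mem_range] <;> omega
  rw [← Finset.sum_subset hsub ?van]
  case van =>
    intro x _ hnx
    simp only [Finset.mem_insert, Finset.mem_singleton, not_or] at hnx
    have h1 : svec a x = 0 := by
      simp only [svec, rvec, Pi.sub_apply, evec]
      rw [if_neg hnx.1, if_neg hnx.2]; ring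
    rw [h1, zero_mul]
  rw [Finset.sum_insert (by simp), Finset.sum_singleton]
  simp only [svec, rvec, Pi.sub_apply, evec]
  split_ifs <;> norm_num <;> omega

lemma tau_inj {i j : ℕ} (hi : i ∈ T.Γ1) (hj : j ∈ T.Γ1) (h : T.τ i = T.τ j) : i = j := by
  have key := T.isometry i hi j hj
  rw [ipn_svec (T.mem2 _ (T.bij.mapsTo hi)) (T.mem2 _ (T.bij.mapsTo hj)),
    ipn_svec (T.mem1 _ hi) (T.mem1 _ hj)] at key
  split_ifs at key <;> (try norm_num at key) <;> omega

lemma tau_adj {j : ℕ} (hj : j ∈ T.Γ1) (hj1 : j + 1 ∈ T.Γ1) :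
    T.τ (j + 1) = T.τ j + 1 ∨ T.τ j = T.τ (j + 1) + 1 := by
  have key := T.isometry j hj (j + 1) hj1
  rw [ipn_svec (T.mem2 _ (T.bij.mapsTo hj)) (T.mem2 _ (T.bij.mapsTo hj1)),
    ipn_svec (T.mem1 _ hj) (T.mem1 _ hj1)] at key
  split_ifs at key <;> (try norm_num at key) <;> omega

lemma affine {a b : ℕ} (hab : a < b) (hsub : ∀ k, a ≤ k → k < b → k ∈ T.Γ1) :
    (∀ j, a ≤ j → j < b → T.τ j = T.τ a + (j - a)) ∨
    (∀ j, a ≤ j → j < b → T.τ j + (j - a) = T.τ a) := by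
  by_cases hb1 : b = a + 1
  · left; intro j h1 h2
    have : j = a := by omega
    subst this
    omega
  · have hadj0 := tau_adj T (hsub a (le_refl a) (by omega)) (hsub (a + 1) (by omega) (by omega))
    rcases hadj0 with hup | hdn
    · left
      have H : ∀ m, a + m < b → T.τ (a + m) = T.τ a + m := by
        intro m
        induction m using Nat.strong_induction_on with
        | _ m ih =>
          match m with
          | 0 => intro _; simp
          | 1 => intro _; simpa using hup
          | (m + 2) =>
            intro hm
            have h1 := ih (m + 1) (by omega) (by omega)
            have h0 := ih m (by omega) (by omega)
            have hadj := tau_adj T (hsub (a + (m + 1)) (by omega) (by omega))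
              (hsub (a + (m + 1) + 1) (by omega) (by omega))
            have e : a + (m + 1) + 1 = a + (m + 2) := by omega
            rw [e] at hadj
            rcases hadj with h | h
            · omega
            · exfalso
              have he : T.τ (a + (m + 2)) = T.τ (a + m) := by omega
              have := tau_inj T (hsub (a + (m + 2)) (by omega) (by omega))
                (hsub (a + m) (by omega) (by omega)) he
              omega
      intro j h1 h2
      have := H (j - a) (by omega)
      have e : a + (j - a) = j := by omega
      rw [e] at this
      omega
    · right
      have H : ∀ m, a + m < b → T.τ (a + m) + m = T.τ a := by
        intro m
        induction m using Nat.strong_induction_on with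
        | _ m ih =>
          match m with
          | 0 => intro _; simp
          | 1 => intro _; simpa using hdn.symm ▸ (by omega : T.τ (a+1) + 1 = T.τ (a+1) + 1)
          | (m + 2) =>
            intro hm
            have h1 := ih (m + 1) (by omega) (by omega)
            have h0 := ih m (by omega) (by omega)
            have hadj := tau_adj T (hsub (a + (m + 1)) (by omega) (by omega))
              (hsub (a + (m + 1) + 1) (by omega) (by omega))
            have e : a + (m + 1) + 1 = a + (m + 2) := by omega
            rw [e] at hadj
            rcases hadj with h | h
            · exfalso
              have he : T.τ (a + (m + 2)) = T.τ (a + m) := by omega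
              have := tau_inj T (hsub (a + (m + 2)) (by omega) (by omega))
                (hsub (a + m) (by omega) (by omega)) he
              omega
            · omega
      intro j h1 h2
      have := H (j - a) (by omega)
      have e : a + (j - a) = j := by omega
      rw [e] at this
      omega

end Aux
section Aux2
variable {n : ℕ} (T : BDTriple n)

lemma sum_svec_up {a b : ℕ} (hab : a < b)
    (hup : ∀ j, a ≤ j → j < b → T.τ j = T.τ a + (j - a)) :
    ∑ k ∈ Finset.Ico a b, svec (T.τ k) = rvec (T.τ a) (T.τ a + (b - a)) := by
  rw [Finset.sum_Ico_eq_sum_range, ← telescope (T.τ a) (b - a)]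
  apply Finset.sum_congr rfl
  intro k hk
  simp only [Finset.mem_range] at hk
  rw [hup (a + k) (by omega) (by omega)]
  exact congrArg svec (by omega)

lemma sum_svec_down {a b : ℕ} (hab : a < b)
    (hdn : ∀ j, a ≤ j → j < b → T.τ j + (j - a) = T.τ a) :
    ∑ k ∈ Finset.Ico a b, svec (T.τ k) = rvec (T.τ a + 1 - (b - a)) (T.τ a + 1) := by
  have hge : b - a - 1 ≤ T.τ a := by
    have := hdn (b - 1) (by omega) (by omega); omega
  rw [Finset.sum_Ico_eq_sum_range]
  have key : ∀ k ∈ range (b - a), svec (T.τ (a + k))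
      = (fun j => svec (T.τ a + 1 - (b - a) + j)) (b - a - 1 - k) := by
    intro k hk
    simp only [Finset.mem_range] at hk
    have h := hdn (a + k) (by omega) (by omega)
    exact congrArg svec (by omega)
  calc ∑ k ∈ range (b - a), svec (T.τ (a + k))
      = ∑ k ∈ range (b - a), (fun j => svec (T.τ a + 1 - (b - a) + j)) (b - a - 1 - k) :=
        Finset.sum_congr rfl key
    _ = ∑ j ∈ range (b - a), svec (T.τ a + 1 - (b - a) + j) := Finset.sum_range_reflect (fun j => svec (T.τ a + 1 - (b - a) + j)) (b - a)
    _ = rvec (T.τ a + 1 - (b - a)) (T.τ a + 1 - (b - a) + (b - a)) := telescope _ _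
    _ = rvec (T.τ a + 1 - (b - a)) (T.τ a + 1) := congrArg _ (by omega)

lemma step_up {a b : ℕ} (hab : a < b) (hsub : ∀ k, a ≤ k → k < b → k ∈ T.Γ1)
    (hup : ∀ j, a ≤ j → j < b → T.τ j = T.τ a + (j - a)) :
    tauStep T (a, b) (T.τ a, T.τ a + (b - a)) :=
  ⟨⟨hab, hsub⟩, by omega, (sum_svec_up T hab hup).symm⟩

lemma step_down {a b : ℕ} (hab : a < b) (hsub : ∀ k, a ≤ k → k < b → k ∈ T.Γ1)
    (hdn : ∀ j, a ≤ j → j < b → T.τ j + (j - a) = T.τ a) :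
    tauStep T (a, b) (T.τ a + 1 - (b - a), T.τ a + 1) :=
  ⟨⟨hab, hsub⟩, by omega, (sum_svec_down T hab hdn).symm⟩

lemma step_uniq {p r r' : ℕ × ℕ} (h : tauStep T p r) (h' : tauStep T p r') : r = r' := by
  obtain ⟨_, hlt, he⟩ := h
  obtain ⟨_, hlt', he'⟩ := h'
  have := rvec_inj hlt hlt' (he.trans he'.symm)
  exact Prod.ext this.1 this.2

lemma step_struct {a b c d : ℕ} (h : tauStep T (a, b) (c, d)) :
    a < b ∧ c < d ∧ b - a = d - c ∧ d < n ∧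
      ((∀ j, a ≤ j → j < b → T.τ j = c + (j - a)) ∨
       (∀ j, a ≤ j → j < b → T.τ j + (j - a) + 1 = d)) := by
  have hab : a < b := h.1.1
  have hsub : ∀ k, a ≤ k → k < b → k ∈ T.Γ1 := h.1.2
  have hcd : c < d := h.2.1
  rcases affine T hab hsub with hup | hdn
  · have h2 := step_up T hab hsub hup
    have he := step_uniq T h h2
    rw [Prod.mk.injEq] at he
    obtain ⟨hc, hd⟩ := he
    have hbm : T.τ (b - 1) = T.τ a + (b - 1 - a) := hup (b - 1) (by omega) (by omega)
    have hΓ2 : T.τ (b - 1) ∈ T.Γ2 := T.bij.mapsTo (hsub (b - 1) (by omega) (by omega))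
    have hdn' := T.mem2 _ hΓ2
    refine ⟨hab, hcd, by omega, by omega, Or.inl fun j h1 h2 => ?_⟩
    rw [hup j h1 h2]
    omega
  · have h2 := step_down T hab hsub hdn
    have he := step_uniq T h h2
    rw [Prod.mk.injEq] at he
    obtain ⟨hc, hd⟩ := he
    have hge : b - a - 1 ≤ T.τ a := by
      have := hdn (b - 1) (by omega) (by omega); omega
    have hΓ2 : T.τ a ∈ T.Γ2 := T.bij.mapsTo (hsub a (le_refl a) hab)
    have hdn' := T.mem2 _ hΓ2
    refine ⟨hab, hcd, by omega, by omega, Or.inr fun j h1 h2 => ?_⟩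
    have := hdn j h1 h2
    omega

lemma substep_up {a b c u v : ℕ} (hsub : ∀ k, a ≤ k → k < b → k ∈ T.Γ1)
    (hup : ∀ j, a ≤ j → j < b → T.τ j = c + (j - a))
    (hu : a ≤ u) (huv : u < v) (hv : v ≤ b) :
    tauStep T (u, v) (c + (u - a), c + (v - a)) := by
  have h0 := step_up T huv (fun k h1 h2 => hsub k (by omega) (by omega))
    (fun j h1 h2 => by rw [hup j (by omega) (by omega), hup u (by omega) (by omega)]; omega)
  have e1 : T.τ u = c + (u - a) := hup u (by omega) (by omega)
  rw [e1] at h0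
  have e2 : c + (u - a) + (v - u) = c + (v - a) := by omega
  rw [e2] at h0
  exact h0

lemma substep_down {a b d u v : ℕ} (hsub : ∀ k, a ≤ k → k < b → k ∈ T.Γ1)
    (hdn : ∀ j, a ≤ j → j < b → T.τ j + (j - a) + 1 = d)
    (hu : a ≤ u) (huv : u < v) (hv : v ≤ b) :
    tauStep T (u, v) (d - (v - a), d - (u - a)) := by
  have h0 := step_down T huv (fun k h1 h2 => hsub k (by omega) (by omega))
    (fun j h1 h2 => by
      have j1 := hdn j (by omega) (by omega)
      have j2 := hdn u (by omega) (by omega)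
      omega)
  have e2 : T.τ u + (u - a) + 1 = d := hdn u (by omega) (by omega)
  have hlast : T.τ (v - 1) + (v - 1 - a) + 1 = d := hdn (v - 1) (by omega) (by omega)
  have e3 : T.τ u + 1 - (v - u) = d - (v - a) := by omega
  have e4 : T.τ u + 1 = d - (u - a) := by omega
  rw [e3, e4] at h0
  exact h0

end Aux2
section Aux3
variable {n : ℕ} (T : BDTriple n)

lemma uniqK : ∀ (k : ℕ) {p q q' : ℕ × ℕ}, precK T k p q → precK T k p q' → q = q' := by
  intro k
  induction k with
  | zero => intro p q q' h h'; exact (h : p = q).symm.trans (h' : p = q')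
  | succ k ih =>
      intro p q q' h h'
      obtain ⟨r, hs, hr⟩ := h
      obtain ⟨r', hs', hr'⟩ := h'
      have : r = r' := step_uniq T hs hs'
      subst this
      exact ih hr hr'

lemma precK_add {s t : ℕ} {p q : ℕ × ℕ} :
    precK T (s + t) p q ↔ ∃ m, precK T s p m ∧ precK T t m q := by
  induction s generalizing p with
  | zero =>
      simp only [Nat.zero_add]
      constructor
      · intro h; exact ⟨p, rfl, h⟩
      · rintro ⟨m, hm, h⟩; exact (hm : p = m) ▸ h
  | succ s ih =>
      have e : s + 1 + t = (s + t) + 1 := by omega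
      rw [e]
      constructor
      · rintro ⟨r, hs', hr⟩
        obtain ⟨m, h1, h2⟩ := ih.mp hr
        exact ⟨m, ⟨r, hs', h1⟩, h2⟩
      · rintro ⟨m, ⟨r, hs', h1⟩, h2⟩
        exact ⟨r, hs', ih.mpr ⟨m, h1, h2⟩⟩

lemma big : ∀ (k : ℕ) {a b c d : ℕ}, precK T (k + 1) (a, b) (c, d) →
    a < b ∧ c < d ∧ b - a = d - c ∧ d < n ∧
    ((∀ j, a ≤ j → j < b → T.τ^[k + 1] j = c + (j - a)) ∧
       (∀ u v, a ≤ u → u < v → v ≤ b → precK T (k + 1) (u, v) (c + (u - a), c + (v - a))) ∨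
     (∀ j, a ≤ j → j < b → T.τ^[k + 1] j + (j - a) + 1 = d) ∧
       (∀ u v, a ≤ u → u < v → v ≤ b → precK T (k + 1) (u, v) (d - (v - a), d - (u - a)))) := by
  intro k
  induction k with
  | zero =>
      intro a b c d h
      obtain ⟨r, hstep, hr⟩ := h
      have hr' : r = (c, d) := hr
      subst hr'
      obtain ⟨hab, hcd, hlen, hdlt, hcase⟩ := step_struct T hstep
      have hsub : ∀ k, a ≤ k → k < b → k ∈ T.Γ1 := hstep.1.2
      refine ⟨hab, hcd, hlen, hdlt, ?_⟩
      rcases hcase with hup | hdw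
      · left
        refine ⟨fun j h1 h2 => by simpa using hup j h1 h2, fun u v h1 h2 h3 => ?_⟩
        exact ⟨_, substep_up T hsub hup h1 h2 h3, rfl⟩
      · right
        refine ⟨fun j h1 h2 => by simpa using hdw j h1 h2, fun u v h1 h2 h3 => ?_⟩
        exact ⟨_, substep_down T hsub hdw h1 h2 h3, rfl⟩
  | succ k ih =>
      intro a b c d h
      obtain ⟨r, hstep, hrest⟩ := h
      obtain ⟨r1, r2⟩ := r
      obtain ⟨hab, hr12, hlen1, _, hcase1⟩ := step_struct T hstep
      obtain ⟨_, hcd, hlen2, hdlt, hcase2⟩ := ih hrest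
      have hsub : ∀ k, a ≤ k → k < b → k ∈ T.Γ1 := hstep.1.2
      refine ⟨hab, hcd, by omega, hdlt, ?_⟩
      rcases hcase1 with h1 | h1 <;> rcases hcase2 with ⟨hf2, hs2⟩ | ⟨hf2, hs2⟩
      · -- up ∘ up = up
        left
        constructor
        · intro j hj1 hj2
          rw [Function.iterate_succ_apply]
          have hτj : T.τ j = r1 + (j - a) := h1 j hj1 hj2
          have hb1 : r1 ≤ T.τ j ∧ T.τ j < r2 := by omega
          have := hf2 (T.τ j) hb1.1 hb1.2
          omega
        · intro u v h1' h2' h3'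
          refine ⟨(r1 + (u - a), r1 + (v - a)), substep_up T hsub h1 h1' h2' h3', ?_⟩
          have hx := hs2 (r1 + (u - a)) (r1 + (v - a)) (by omega) (by omega) (by omega)
          have e1 : c + (r1 + (u - a) - r1) = c + (u - a) := by omega
          have e2 : c + (r1 + (v - a) - r1) = c + (v - a) := by omega
          rw [e1, e2] at hx
          exact hx
      · -- up ∘ down = down
        right
        constructor
        · intro j hj1 hj2
          rw [Function.iterate_succ_apply]
          have hτj : T.τ j = r1 + (j - a) := h1 j hj1 hj2
          have hb1 : r1 ≤ T.τ j ∧ T.τ j < r2 := by omega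
          have := hf2 (T.τ j) hb1.1 hb1.2
          omega
        · intro u v h1' h2' h3'
          refine ⟨(r1 + (u - a), r1 + (v - a)), substep_up T hsub h1 h1' h2' h3', ?_⟩
          have hx := hs2 (r1 + (u - a)) (r1 + (v - a)) (by omega) (by omega) (by omega)
          have e1 : d - (r1 + (v - a) - r1) = d - (v - a) := by omega
          have e2 : d - (r1 + (u - a) - r1) = d - (u - a) := by omega
          rw [e1, e2] at hx
          exact hx
      · -- down ∘ up = down
        right
        constructor
        · intro j hj1 hj2
          rw [Function.iterate_succ_apply]
          have hτj : T.τ j + (j - a) + 1 = r2 := h1 j hj1 hj2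
          have hb1 : r1 ≤ T.τ j ∧ T.τ j < r2 := by omega
          have := hf2 (T.τ j) hb1.1 hb1.2
          omega
        · intro u v h1' h2' h3'
          refine ⟨(r2 - (v - a), r2 - (u - a)), substep_down T hsub h1 h1' h2' h3', ?_⟩
          have hx := hs2 (r2 - (v - a)) (r2 - (u - a)) (by omega) (by omega) (by omega)
          have e1 : c + (r2 - (v - a) - r1) = d - (v - a) := by omega
          have e2 : c + (r2 - (u - a) - r1) = d - (u - a) := by omega
          rw [e1, e2] at hx
          exact hx
      · -- down ∘ down = up
        left
        constructor
        · intro j hj1 hj2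
          rw [Function.iterate_succ_apply]
          have hτj : T.τ j + (j - a) + 1 = r2 := h1 j hj1 hj2
          have hb1 : r1 ≤ T.τ j ∧ T.τ j < r2 := by omega
          have := hf2 (T.τ j) hb1.1 hb1.2
          omega
        · intro u v h1' h2' h3'
          refine ⟨(r2 - (v - a), r2 - (u - a)), substep_down T hsub h1 h1' h2' h3', ?_⟩
          have hx := hs2 (r2 - (v - a)) (r2 - (u - a)) (by omega) (by omega) (by omega)
          have e1 : d - (r2 - (u - a) - r1) = c + (u - a) := by omega
          have e2 : d - (r2 - (v - a) - r1) = c + (v - a) := by omega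
          rw [e1, e2] at hx
          exact hx

lemma inGamma : ∀ (k : ℕ) {p q : ℕ × ℕ}, precK T k p q →
    ∀ j, p.1 ≤ j → j < p.2 → ∀ t, t < k → T.τ^[t] j ∈ T.Γ1 := by
  intro k
  induction k with
  | zero => intro p q _ j _ _ t ht; omega
  | succ k ih =>
      intro p q h j hj1 hj2 t ht
      obtain ⟨a, b⟩ := p
      obtain ⟨r, hstep, hrest⟩ := h
      obtain ⟨r1, r2⟩ := r
      obtain ⟨hab, hr12, hlen1, _, hcase1⟩ := step_struct T hstep
      match t with
      | 0 => exact hstep.1.2 j hj1 hj2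
      | (t + 1) =>
          rw [Function.iterate_succ_apply]
          have hτj : r1 ≤ T.τ j ∧ T.τ j < r2 := by
            rcases hcase1 with h1 | h1
            · have := h1 j hj1 hj2; omega
            · have := h1 j hj1 hj2; omega
          exact ih hrest (T.τ j) hτj.1 hτj.2 t (by omega)

lemma nocycle {d : ℕ} {p : ℕ × ℕ} (hd : 1 ≤ d) (h : precK T d p p) : False := by
  obtain ⟨a, b⟩ := p
  obtain ⟨k, rfl⟩ : ∃ k, d = k + 1 := ⟨d - 1, by omega⟩
  have hab : a < b := (big T k h).1
  have haΓ : a ∈ T.Γ1 := by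
    obtain ⟨r, hs, _⟩ := h
    exact hs.1.2 a (le_refl a) hab
  obtain ⟨N, hN1, hNout⟩ := T.nilp a haΓ
  have hiter : ∀ m, precK T (m * (k + 1)) (a, b) (a, b) := by
    intro m
    induction m with
    | zero => rw [Nat.zero_mul]; exact rfl
    | succ m ih =>
        have e : (m + 1) * (k + 1) = m * (k + 1) + (k + 1) := by ring
        rw [e]
        exact (precK_add T).mpr ⟨(a, b), ih, h⟩
  have hle : N + 1 ≤ (N + 1) * (k + 1) := Nat.le_mul_of_pos_right _ (by omega)
  exact hNout (inGamma T ((N + 1) * (k + 1)) (hiter (N + 1)) a (le_refl a) hab N (by omega))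

lemma level_uniq {i j : ℕ} {p q : ℕ × ℕ} (hi : precK T (i + 1) p q)
    (hj : precK T (j + 1) p q) : i = j := by
  rcases lt_trichotomy i j with h | h | h
  · exfalso
    have e : j + 1 = (i + 1) + (j - i) := by omega
    rw [e] at hj
    obtain ⟨m, h1, h2⟩ := (precK_add T).mp hj
    have : m = q := uniqK T (i + 1) h1 hi
    subst this
    exact nocycle T (by omega) h2
  · exact h
  · exfalso
    have e : i + 1 = (j + 1) + (i - j) := by omega
    rw [e] at hi
    obtain ⟨m, h1, h2⟩ := (precK_add T).mp hi
    have : m = q := uniqK T (j + 1) h1 hj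
    subst this
    exact nocycle T (by omega) h2

lemma kbound {k : ℕ} {p q : ℕ × ℕ} (hn : 2 ≤ n) (h : precK T (k + 1) p q) : k + 1 < n := by
  have hM : ∀ t : ℕ, ∃ m : ℕ × ℕ, t ≤ k → (precK T (t + 1) p m ∧ precK T (k - t) m q) := by
    intro t
    by_cases ht : t ≤ k
    · have e : k + 1 = (t + 1) + (k - t) := by omega
      rw [e] at h
      obtain ⟨m, h1, h2⟩ := (precK_add T).mp h
      exact ⟨m, fun _ => ⟨h1, h2⟩⟩
    · exact ⟨p, fun h' => absurd h' ht⟩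
  choose M hM using hM
  have hlen : ∀ t, t ≤ k → (M t).1 < (M t).2 ∧ (M t).2 - (M t).1 = p.2 - p.1 ∧ (M t).2 < n := by
    intro t ht
    obtain ⟨h1, _⟩ := hM t ht
    have hb := big T t (a := p.1) (b := p.2) (c := (M t).1) (d := (M t).2) h1
    exact ⟨hb.2.1, by omega, hb.2.2.2.1⟩
  have hL : 1 ≤ p.2 - p.1 := by
    have := (big T 0 (a := p.1) (b := p.2) (hM 0 (by omega)).1).1
    omega
  have hinj : ∀ s ∈ range (k + 1), ∀ t ∈ range (k + 1),
      (M s).1 = (M t).1 → s = t := by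
    intro s hs t ht hEq
    simp only [Finset.mem_range] at hs ht
    have h1 := hlen s (by omega)
    have h2 := hlen t (by omega)
    have hMeq : M s = M t := Prod.ext hEq (by omega)
    exact level_uniq T (hM s (by omega)).1 (hMeq ▸ (hM t (by omega)).1)
  have hcard : (range (k + 1)).card ≤ (range (n - 1)).card := by
    apply Finset.card_le_card_of_injOn (fun t => (M t).1)
    · intro t ht
      simp only [Finset.mem_coe, Finset.mem_range] at *
      have := hlen t (by omega)
      omega
    · intro s hs t ht hEq
      exact hinj s hs t ht hEq
  simp only [Finset.card_range] at hcard
  omega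

lemma glue : ∀ (K : ℕ) {a m b : ℕ} {U V : ℕ × ℕ}, a < m → m < b →
    precK T K (a, m) U → precK T K (m, b) V →
    precK T K (a, b) (U.1, V.2) ∨ precK T K (a, b) (V.1, U.2) := by
  intro K
  induction K with
  | zero =>
      intro a m b U V ham hmb hU hV
      have hU' : (a, m) = U := hU
      have hV' : (m, b) = V := hV
      left
      show (a, b) = (U.1, V.2)
      rw [← hU', ← hV']
  | succ K ih =>
      intro a m b U V ham hmb hU hV
      obtain ⟨u0, hsu, hru⟩ := hU
      obtain ⟨v0, hsv, hrv⟩ := hV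
      have hsub1 : ∀ k, a ≤ k → k < m → k ∈ T.Γ1 := hsu.1.2
      have hsub2 : ∀ k, m ≤ k → k < b → k ∈ T.Γ1 := hsv.1.2
      have hsub : ∀ j, a ≤ j → j < b → j ∈ T.Γ1 := by
        intro j h1 h2
        by_cases hj : j < m
        · exact hsub1 j h1 hj
        · exact hsub2 j (by omega) h2
      rcases affine T (show a < b by omega) hsub with hup | hdn
      · have hτm : T.τ m = T.τ a + (m - a) := hup m (by omega) (by omega)
        have e1 : u0 = (T.τ a, T.τ a + (m - a)) :=
          step_uniq T hsu (step_up T ham (fun k h1 h2 => hsub k h1 (by omega))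
            (fun j h1 h2 => hup j h1 (by omega)))
        have e2 : v0 = (T.τ a + (m - a), T.τ a + (b - a)) := by
          have := step_uniq T hsv (step_up T hmb (fun k h1 h2 => hsub k (by omega) h2)
            (fun j h1 h2 => by rw [hup j (by omega) h2, hτm]; omega))
          rw [this, hτm]
          exact Prod.ext rfl (by omega)
        have hstep : tauStep T (a, b) (T.τ a, T.τ a + (b - a)) :=
          step_up T (by omega) hsub hup
        rw [e1] at hru
        rw [e2] at hrv
        rcases ih (show T.τ a < T.τ a + (m - a) by omega)
            (show T.τ a + (m - a) < T.τ a + (b - a) by omega) hru hrv with hh | hh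
        · exact Or.inl ⟨_, hstep, hh⟩
        · exact Or.inr ⟨_, hstep, hh⟩
      · have hτm : T.τ m + (m - a) = T.τ a := hdn m (by omega) (by omega)
        have hgea : b - a - 1 ≤ T.τ a := by
          have := hdn (b - 1) (by omega) (by omega); omega
        have e1 : u0 = (T.τ m + 1, T.τ a + 1) := by
          have := step_uniq T hsu (step_down T ham (fun k h1 h2 => hsub k h1 (by omega))
            (fun j h1 h2 => hdn j h1 (by omega)))
          rw [this]
          exact Prod.ext (by omega) rfl
        have e2 : v0 = (T.τ a + 1 - (b - a), T.τ m + 1) := by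
          have := step_uniq T hsv (step_down T hmb (fun k h1 h2 => hsub k (by omega) h2)
            (fun j h1 h2 => by
              have j1 := hdn j (by omega) h2
              omega))
          rw [this]
          exact Prod.ext (by omega) rfl
        have hstep : tauStep T (a, b) (T.τ a + 1 - (b - a), T.τ a + 1) :=
          step_down T (by omega) hsub hdn
        rw [e1] at hru
        rw [e2] at hrv
        rcases ih (show T.τ a + 1 - (b - a) < T.τ m + 1 by omega)
            (show T.τ m + 1 < T.τ a + 1 by omega) hrv hru with hh | hh
        · exact Or.inr ⟨_, hstep, hh⟩
        · exact Or.inl ⟨_, hstep, hh⟩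

end Aux3
section Aux4
variable {n : ℕ} (T : BDTriple n)

/-- Coefficient of `a₊`-type sums. -/
def cc (T : BDTriple n) (K : ℕ) (p q : ℕ × ℕ) : ℂ :=
  if precK T K p q then -sgn T p q else 0

lemma recon {K g1 g2 d1 d2 z1 z2 : ℕ}
    (h1 : precK T (K + 1) (z2, g2) (d1, z1)) (h2 : precK T (K + 1) (g1, z2) (z1, d2)) :
    precK T (K + 1) (g1, g2) (d1, d2) ∧ T.τ^[K + 1] g1 + 1 = d2 ∧
      g1 < z2 ∧ z2 < g2 ∧ z1 = d1 + (g2 - z2) := by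
  obtain ⟨hz2g2, hd1z1, hl1, _, _⟩ := big T K h1
  obtain ⟨hg1z2, hz1d2, hl2, _, _⟩ := big T K h2
  rcases glue T (K + 1) hg1z2 hz2g2 h2 h1 with hglue | hglue
  · exact absurd (big T K hglue).2.1 (lt_irrefl z1)
  · obtain ⟨_, hd1d2, hlen, _, hcase⟩ := big T K hglue
    rcases hcase with ⟨hf, hs⟩ | ⟨hf, hs⟩
    · exfalso
      have hx := hs z2 g2 (by omega) hz2g2 (le_refl g2)
      have heq := uniqK T (K + 1) hx h1
      rw [Prod.mk.injEq] at heq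
      omega
    · have hrev : T.τ^[K + 1] g1 + 1 = d2 := by
        have := hf g1 (le_refl g1) (by omega); omega
      have hx := hs z2 g2 (by omega) hz2g2 (le_refl g2)
      have heq := uniqK T (K + 1) hx h1
      rw [Prod.mk.injEq] at heq
      exact ⟨hglue, hrev, hg1z2, hz2g2, by omega⟩

lemma scalar (hn : 2 ≤ n) {g1 g2 d1 d2 : ℕ} (hg2 : g2 < n) :
    (∑ i ∈ range n, ∑ z1 ∈ range n, ∑ z2 ∈ range n,
        cc T (i + 1) (z2, g2) (d1, z1) * cc T (i + 1) (g1, z2) (z1, d2))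
      = -(if RevOri T (g1, g2) (d1, d2) then
            sgn T (g1, g2) (d1, d2) * (((g2 - g1 : ℕ) : ℂ) - 1) else 0) := by
  by_cases hrev : RevOri T (g1, g2) (d1, d2)
  case neg =>
    rw [if_neg hrev, neg_zero]
    apply Finset.sum_eq_zero; intro i _
    apply Finset.sum_eq_zero; intro z1 _
    apply Finset.sum_eq_zero; intro z2 _
    by_contra hne
    have hc1 : precK T (i + 1) (z2, g2) (d1, z1) := by
      by_contra hp; simp [cc, if_neg hp] at hne
    have hc2 : precK T (i + 1) (g1, z2) (z1, d2) := by
      by_contra hp; simp [cc, if_neg hp] at hne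
    obtain ⟨hglue, htr, _, _, _⟩ := recon T hc1 hc2
    exact hrev ⟨i, hglue, show T.τ^[i + 1] g1 = d2 - 1 by omega⟩
  case pos =>
    obtain ⟨k, hk, htr⟩ := hrev
    have hrev' : RevOri T (g1, g2) (d1, d2) := ⟨k, hk, htr⟩
    have htr' : T.τ^[k + 1] g1 = d2 - 1 := htr
    obtain ⟨hg, hd, hlen, hdn2, hcase⟩ := big T k hk
    have hDown : (∀ j, g1 ≤ j → j < g2 → T.τ^[k + 1] j + (j - g1) + 1 = d2) ∧
        (∀ u v, g1 ≤ u → u < v → v ≤ g2 →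
          precK T (k + 1) (u, v) (d2 - (v - g1), d2 - (u - g1))) := by
      rcases hcase with ⟨hf, hs⟩ | h
      · have hL1 : g2 - g1 = 1 := by
          have := hf g1 (le_refl g1) (by omega)
          omega
        constructor
        · intro j h1 h2
          have hj : j = g1 := by omega
          subst hj
          omega
        · intro u v h1 h2 h3
          have hu : u = g1 := by omega
          have hv : v = g2 := by omega
          subst hu; subst hv
          have hx := hs u v (le_refl u) h2 (le_refl v)
          have e : (d1 + (u - u), d1 + (v - u)) = (d2 - (v - u), d2 - (u - u)) := by
            rw [Prod.mk.injEq]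
            constructor <;> omega
          rw [e] at hx
          exact hx
      · exact h
    have hkn : k < n := by
      have := kbound T hn hk; omega
    have hswap : ∀ i : ℕ, (∑ z1 ∈ range n, ∑ z2 ∈ range n,
        cc T (i + 1) (z2, g2) (d1, z1) * cc T (i + 1) (g1, z2) (z1, d2))
        = ∑ z2 ∈ range n, ∑ z1 ∈ range n,
        cc T (i + 1) (z2, g2) (d1, z1) * cc T (i + 1) (g1, z2) (z1, d2) :=
      fun i => Finset.sum_comm
    rw [Finset.sum_congr rfl fun i _ => hswap i]
    have key : ∀ i ∈ range n, ∀ z2 ∈ range n, ∀ z1 ∈ range n,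
        cc T (i + 1) (z2, g2) (d1, z1) * cc T (i + 1) (g1, z2) (z1, d2)
          = if i = k then (if g1 < z2 ∧ z2 < g2 then
              (if z1 = d1 + (g2 - z2) then (-1 : ℂ) ^ (g2 - g1) else 0) else 0) else 0 := by
      intro i _ z2 _ z1 _
      by_cases hcond : i = k ∧ (g1 < z2 ∧ z2 < g2) ∧ z1 = d1 + (g2 - z2)
      · obtain ⟨hik, ⟨hb1, hb2⟩, hz1⟩ := hcond
        subst hik; subst hz1
        rw [if_pos rfl, if_pos ⟨hb1, hb2⟩, if_pos rfl]
        have hpc1 : precK T (i + 1) (z2, g2) (d1, d1 + (g2 - z2)) := by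
          have hx := hDown.2 z2 g2 (by omega) hb2 (le_refl g2)
          have e : (d2 - (g2 - g1), d2 - (z2 - g1)) = (d1, d1 + (g2 - z2)) := by
            rw [Prod.mk.injEq]; constructor <;> omega
          rw [e] at hx; exact hx
        have hpc2 : precK T (i + 1) (g1, z2) (d1 + (g2 - z2), d2) := by
          have hx := hDown.2 g1 z2 (le_refl g1) hb1 (by omega)
          have e : (d2 - (z2 - g1), d2 - (g1 - g1)) = (d1 + (g2 - z2), d2) := by
            rw [Prod.mk.injEq]; constructor <;> omega
          rw [e] at hx; exact hx
        have hrev1 : RevOri T (z2, g2) (d1, d1 + (g2 - z2)) := by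
          refine ⟨i, hpc1, show T.τ^[i + 1] z2 = d1 + (g2 - z2) - 1 from ?_⟩
          have := hDown.1 z2 (by omega) hb2
          omega
        have hrev2 : RevOri T (g1, z2) (d1 + (g2 - z2), d2) := by
          refine ⟨i, hpc2, show T.τ^[i + 1] g1 = d2 - 1 from ?_⟩
          exact htr'
        have hfin : ∀ x y L : ℕ, x + y + 2 = L → (-(-1 : ℂ) ^ x) * (-(-1 : ℂ) ^ y) = (-1 : ℂ) ^ L := by
          intro x y L hL
          subst hL
          rw [pow_add, pow_add]
          ring
        simp only [cc, sgn, hpc1, hpc2, hrev1, hrev2, if_true]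
        exact hfin (g2 - z2 - 1) (z2 - g1 - 1) (g2 - g1) (by omega)
      · have hz : (if i = k then (if g1 < z2 ∧ z2 < g2 then
            (if z1 = d1 + (g2 - z2) then (-1 : ℂ) ^ (g2 - g1) else 0) else 0) else 0) = 0 := by
          split_ifs with p1 p2 p3
          · exact absurd ⟨p1, p2, p3⟩ hcond
          all_goals rfl
        rw [hz]
        by_contra hne
        have hc1 : precK T (i + 1) (z2, g2) (d1, z1) := by
          by_contra hp; simp [cc, if_neg hp] at hne
        have hc2 : precK T (i + 1) (g1, z2) (z1, d2) := by
          by_contra hp; simp [cc, if_neg hp] at hne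
        obtain ⟨hglue, htr2, hbb1, hbb2, hzz⟩ := recon T hc1 hc2
        have : i = k := level_uniq T hglue hk
        exact hcond ⟨this, ⟨hbb1, hbb2⟩, hzz⟩
    rw [Finset.sum_congr rfl fun i hi => Finset.sum_congr rfl fun z2 hz2 =>
      Finset.sum_congr rfl fun z1 hz1 => key i hi z2 hz2 z1 hz1]
    have hsum1 : ∀ i ∈ range n, ∀ z2 ∈ range n,
        (∑ z1 ∈ range n, if i = k then (if g1 < z2 ∧ z2 < g2 then
            (if z1 = d1 + (g2 - z2) then (-1 : ℂ) ^ (g2 - g1) else 0) else 0) else 0)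
          = if i = k then (if g1 < z2 ∧ z2 < g2 then (-1 : ℂ) ^ (g2 - g1) else 0) else 0 := by
      intro i _ z2 _
      by_cases h1 : i = k
      · by_cases h2 : g1 < z2 ∧ z2 < g2
        · simp only [h1, eq_self_iff_true, if_true, h2, true_and, and_self]
          rw [Finset.sum_ite_eq' (range n) (d1 + (g2 - z2)) fun _ => (-1 : ℂ) ^ (g2 - g1)]
          rw [if_pos (Finset.mem_range.mpr (by omega))]
        · simp [h1, h2]
      · simp [h1]
    rw [Finset.sum_congr rfl fun i hi => Finset.sum_congr rfl fun z2 hz2 => hsum1 i hi z2 hz2]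
    have hsum2 : ∀ i ∈ range n,
        (∑ z2 ∈ range n, if i = k then
            (if g1 < z2 ∧ z2 < g2 then (-1 : ℂ) ^ (g2 - g1) else 0) else 0)
          = if i = k then ((g2 - g1 - 1 : ℕ) : ℂ) * (-1 : ℂ) ^ (g2 - g1) else 0 := by
      intro i _
      by_cases h1 : i = k
      · simp only [h1, eq_self_iff_true, if_true]
        rw [Finset.sum_ite, Finset.sum_const_zero, add_zero, Finset.sum_const]
        have hfil : (Finset.filter (fun z2 => g1 < z2 ∧ z2 < g2) (range n)) = Finset.Ioo g1 g2 := by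
          ext x
          simp only [Finset.mem_filter, Finset.mem_range, Finset.mem_Ioo]
          omega
        rw [hfil, Nat.card_Ioo, nsmul_eq_mul]
      · simp [h1]
    rw [Finset.sum_congr rfl fun i hi => hsum2 i hi]
    rw [Finset.sum_ite_eq' (range n) k fun _ => ((g2 - g1 - 1 : ℕ) : ℂ) * (-1 : ℂ) ^ (g2 - g1)]
    rw [if_pos (Finset.mem_range.mpr hkn), if_pos hrev']
    simp only [sgn, hrev', if_true]
    have h1 : 1 ≤ g2 - g1 := by omega
    have hc : ((g2 - g1 - 1 : ℕ) : ℂ) = ((g2 - g1 : ℕ) : ℂ) - 1 := by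
      push_cast [h1]
      ring
    have hp : (-1 : ℂ) ^ (g2 - g1) = -(-1 : ℂ) ^ (g2 - g1 - 1) := by
      conv_lhs => rw [show g2 - g1 = (g2 - g1 - 1) + 1 from by omega]
      rw [pow_succ]
      ring
    rw [hc, hp]
    ring

end Aux4
section Aux5
variable {n : ℕ} (T : BDTriple n)

lemma collapse {s : Finset ℕ} {a : ℕ} (ha : a ∈ s) (f : ℕ → ℂ) :
    ∑ i ∈ s, (if a = i then (1 : ℂ) else 0) * f i = f a := by
  have h : ∀ i ∈ s, (if a = i then (1 : ℂ) else 0) * f i = if a = i then f i else 0 := by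
    intro i _
    split_ifs <;> ring
  rw [Finset.sum_congr rfl h, Finset.sum_ite_eq, if_pos ha]

lemma entry_sum (h : ℕ × ℕ → ℕ × ℕ → ℂ) (x1 x2 y1 y2 : Fin n) :
    (sumRoots n fun p q => h p q • tens (E n q.1 q.2) (E n p.2 p.1)) (x1, x2) (y1, y2)
      = h ((y2 : ℕ), (x2 : ℕ)) ((x1 : ℕ), (y1 : ℕ)) := by
  unfold sumRoots
  simp only [Matrix.sum_apply, Matrix.smul_apply, smul_eq_mul, tens, E]
  have step : ∀ i j k l : ℕ,
      h (i, j) (k, l) * ((if ((x1 : ℕ) = k ∧ (y1 : ℕ) = l) then (1 : ℂ) else 0) *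
        (if ((x2 : ℕ) = j ∧ (y2 : ℕ) = i) then (1 : ℂ) else 0))
      = (if (y2 : ℕ) = i then (1 : ℂ) else 0) * ((if (x2 : ℕ) = j then (1 : ℂ) else 0) *
          ((if (x1 : ℕ) = k then (1 : ℂ) else 0) *
            ((if (y1 : ℕ) = l then (1 : ℂ) else 0) * h (i, j) (k, l)))) := by
    intro i j k l
    split_ifs <;> first | (exfalso; tauto) | ring
  rw [Finset.sum_congr rfl fun i _ => Finset.sum_congr rfl fun j _ =>
    Finset.sum_congr rfl fun k _ => Finset.sum_congr rfl fun l _ => step i j k l]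
  simp only [← Finset.mul_sum]
  have c4 : ∀ i j k : ℕ,
      (∑ l ∈ range n, (if (y1 : ℕ) = l then (1 : ℂ) else 0) * h (i, j) (k, l))
        = h (i, j) (k, (y1 : ℕ)) :=
    fun i j k => collapse (Finset.mem_range.mpr y1.isLt) _
  have c3 : ∀ i j : ℕ,
      (∑ k ∈ range n, (if (x1 : ℕ) = k then (1 : ℂ) else 0) * h (i, j) (k, (y1 : ℕ)))
        = h (i, j) ((x1 : ℕ), (y1 : ℕ)) :=
    fun i j => collapse (Finset.mem_range.mpr x1.isLt) _
  have c2 : ∀ i : ℕ,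
      (∑ j ∈ range n, (if (x2 : ℕ) = j then (1 : ℂ) else 0) * h (i, j) ((x1 : ℕ), (y1 : ℕ)))
        = h (i, (x2 : ℕ)) ((x1 : ℕ), (y1 : ℕ)) :=
    fun i => collapse (Finset.mem_range.mpr x2.isLt) _
  have c1 : (∑ i ∈ range n, (if (y2 : ℕ) = i then (1 : ℂ) else 0) * h (i, (x2 : ℕ)) ((x1 : ℕ), (y1 : ℕ)))
        = h ((y2 : ℕ), (x2 : ℕ)) ((x1 : ℕ), (y1 : ℕ)) :=
    collapse (Finset.mem_range.mpr y2.isLt) _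
  simp only [c4, c3, c2, c1]

end Aux5
/-- `Σ_i (a₊ⁱ)² = −Σ_{α ≺← β} sign(α,β)(|α|−1) e_β ⊗ e_{−α}`. -/
theorem stmt_3 {n : ℕ} (hn : 2 ≤ n) (T : BDTriple n) :
    (∑ i ∈ range n, aPlusLev T (i + 1) * aPlusLev T (i + 1))
      = - sumRoots n fun p q =>
          if RevOri T p q then
            (sgn T p q * (((p.2 - p.1 : ℕ) : ℂ) - 1)) • tens (E n q.1 q.2) (E n p.2 p.1)
          else 0 := by
  have hA : ∀ K : ℕ, aPlusLev T K
      = sumRoots n fun p r => cc T K p r • tens (E n r.1 r.2) (E n p.2 p.1) := by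
    intro K
    unfold aPlusLev cc
    refine congrArg (sumRoots n) ?_
    funext p r
    split_ifs with h
    · rfl
    · rw [zero_smul]
  have hB : (sumRoots n fun p q => if RevOri T p q then
        (sgn T p q * (((p.2 - p.1 : ℕ) : ℂ) - 1)) • tens (E n q.1 q.2) (E n p.2 p.1) else 0)
      = sumRoots n fun p q =>
          (if RevOri T p q then sgn T p q * (((p.2 - p.1 : ℕ) : ℂ) - 1) else 0)
            • tens (E n q.1 q.2) (E n p.2 p.1) := by
    refine congrArg (sumRoots n) ?_
    funext p q
    split_ifs with h
    · rfl
    · rw [zero_smul]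
  rw [hB]
  simp only [hA]
  ext ⟨x1, x2⟩ ⟨y1, y2⟩
  rw [Matrix.sum_apply, Matrix.neg_apply, entry_sum]
  simp only [Matrix.mul_apply, Fintype.sum_prod_type, entry_sum]
  have hfin2 : ∀ i : ℕ,
      (∑ z1 : Fin n, ∑ z2 : Fin n,
        cc T (i + 1) ((z2 : ℕ), (x2 : ℕ)) ((x1 : ℕ), (z1 : ℕ)) *
          cc T (i + 1) ((y2 : ℕ), (z2 : ℕ)) ((z1 : ℕ), (y1 : ℕ)))
      = ∑ z1 ∈ range n, ∑ z2 ∈ range n,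
        cc T (i + 1) (z2, (x2 : ℕ)) ((x1 : ℕ), z1) *
          cc T (i + 1) ((y2 : ℕ), z2) (z1, (y1 : ℕ)) := by
    intro i
    have e1 : ∀ z1 : Fin n,
        (∑ z2 : Fin n, cc T (i + 1) ((z2 : ℕ), (x2 : ℕ)) ((x1 : ℕ), (z1 : ℕ)) *
          cc T (i + 1) ((y2 : ℕ), (z2 : ℕ)) ((z1 : ℕ), (y1 : ℕ)))
        = ∑ z2 ∈ range n, cc T (i + 1) (z2, (x2 : ℕ)) ((x1 : ℕ), (z1 : ℕ)) *
          cc T (i + 1) ((y2 : ℕ), z2) ((z1 : ℕ), (y1 : ℕ)) := fun z1 =>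
      Fin.sum_univ_eq_sum_range (fun z2 => cc T (i + 1) (z2, (x2 : ℕ)) ((x1 : ℕ), (z1 : ℕ)) *
          cc T (i + 1) ((y2 : ℕ), z2) ((z1 : ℕ), (y1 : ℕ))) n
    rw [Finset.sum_congr rfl fun z1 _ => e1 z1]
    exact Fin.sum_univ_eq_sum_range (fun z1 => ∑ z2 ∈ range n,
      cc T (i + 1) (z2, (x2 : ℕ)) ((x1 : ℕ), z1) *
        cc T (i + 1) ((y2 : ℕ), z2) (z1, (y1 : ℕ))) n
  rw [Finset.sum_congr rfl fun i _ => hfin2 i]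
  exact scalar T hn x2.isLt
end
end GGS
end

section
/- Let (Γ₁, Γ₂, τ) be a Belavin–Drinfeld triple of type A_{n−1}. If α_{i_1},…,α_{i_m}, α_{j_1},…,α_{j_m} ∈ Γ₁ satisfy Σ_{k=1}^m (τα_{i_k} − α_{i_k}) = Σ_{k=1}^m (τα_{j_k} − α_{j_k}) in ℂⁿ, then there is a permutation ρ ∈ S_m with i_k = j_{ρ(k)} for all k. -/
namespace GGS

open Finset
open scoped Classical

noncomputable section

variable {n : ℕ}

lemma svec_partial (t s : ℕ) :
    (∑ u ∈ range (s + 1), svec t u) = if t = s then 1 else 0 := by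
  have h : ∀ u, svec t u = (if u = t then (1:ℂ) else 0) - (if u = t + 1 then 1 else 0) := by
    intro u; simp [svec, rvec, evec]
  simp only [h]
  rw [Finset.sum_sub_distrib]
  simp only [Finset.sum_ite_eq', Finset.mem_range]
  rcases eq_or_ne t s with h | h
  · subst h; simp
  · rw [if_neg h]
    rcases lt_or_ge t s with h2 | h2
    · rw [if_pos (by omega), if_pos (by omega)]; ring
    · rw [if_neg (by omega), if_neg (by omega)]; ring

/-- if `Σ_k (τα_{i_k} − α_{i_k}) = Σ_k (τα_{j_k} − α_{j_k})` then the index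
sequences agree up to a permutation. -/
theorem stmt_4 {n m : ℕ} (hn : 2 ≤ n) (T : BDTriple n)
    (i j : Fin m → ℕ) (hi : ∀ k, i k ∈ T.Γ1) (hj : ∀ k, j k ∈ T.Γ1)
    (heq : ∑ k, (svec (T.τ (i k)) - svec (i k)) = ∑ k, (svec (T.τ (j k)) - svec (j k))) :
    ∃ ρ : Equiv.Perm (Fin m), ∀ k, i k = j (ρ k) := by
  classical
  -- counting functions
  set ci : ℕ → ℂ := fun s => ∑ k : Fin m, (if i k = s then (1:ℂ) else 0) with hci
  set cj : ℕ → ℂ := fun s => ∑ k : Fin m, (if j k = s then (1:ℂ) else 0) with hcj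
  set ei : ℕ → ℂ := fun s => ∑ k : Fin m, (if T.τ (i k) = s then (1:ℂ) else 0) with hei
  set ej : ℕ → ℂ := fun s => ∑ k : Fin m, (if T.τ (j k) = s then (1:ℂ) else 0) with hej
  set d : ℕ → ℂ := fun s => ci s - cj s with hd
  -- key balance equation from heq
  have hB : ∀ s, ei s - ci s = ej s - cj s := by
    intro s
    have h1 : ∀ u, (∑ k : Fin m, (svec (T.τ (i k)) - svec (i k))) u
        = (∑ k : Fin m, (svec (T.τ (j k)) - svec (j k))) u := fun u => congrFun heq u
    have h2 : ∑ u ∈ range (s+1), ∑ k : Fin m, (svec (T.τ (i k)) u - svec (i k) u)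
        = ∑ u ∈ range (s+1), ∑ k : Fin m, (svec (T.τ (j k)) u - svec (j k) u) := by
      apply Finset.sum_congr rfl
      intro u _
      have := h1 u
      simpa [Finset.sum_apply] using this
    rw [Finset.sum_comm, Finset.sum_comm (s := range (s+1))] at h2
    simp only [Finset.sum_sub_distrib, svec_partial] at h2
    simpa [hei, hci, hej, hcj, Finset.sum_sub_distrib] using h2
  -- d vanishes outside Γ1
  have hout : ∀ s, s ∉ T.Γ1 → d s = 0 := by
    intro s hs
    have h1 : ci s = 0 := by
      apply Finset.sum_eq_zero; intro k _
      rw [if_neg]; intro h; exact hs (h ▸ hi k)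
    have h2 : cj s = 0 := by
      apply Finset.sum_eq_zero; intro k _
      rw [if_neg]; intro h; exact hs (h ▸ hj k)
    simp [hd, h1, h2]
  -- recursion: d t = d (τ t) for t ∈ Γ1
  have hrec : ∀ t ∈ T.Γ1, d t = d (T.τ t) := by
    intro t ht
    have hci' : ei (T.τ t) = ci t := by
      apply Finset.sum_congr rfl
      intro k _
      by_cases h : i k = t
      · rw [if_pos h, if_pos (by rw [h])]
      · rw [if_neg h, if_neg]
        intro h'
        exact h (T.bij.injOn (hi k) ht h')
    have hcj' : ej (T.τ t) = cj t := by
      apply Finset.sum_congr rfl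
      intro k _
      by_cases h : j k = t
      · rw [if_pos h, if_pos (by rw [h])]
      · rw [if_neg h, if_neg]
        intro h'
        exact h (T.bij.injOn (hj k) ht h')
    have := hB (T.τ t)
    have : ei (T.τ t) - ej (T.τ t) = ci (T.τ t) - cj (T.τ t) := by
      linear_combination this
    rw [hci', hcj'] at this
    simp only [hd]
    rw [← this]
  -- d vanishes everywhere via nilpotency
  have hiter : ∀ K t, T.τ^[K] t ∉ T.Γ1 → d t = 0 := by
    intro K
    induction K with
    | zero => intro t ht; exact hout t ht
    | succ K ih =>
      intro t ht
      by_cases h : t ∈ T.Γ1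
      · rw [hrec t h]
        apply ih
        rwa [Function.iterate_succ_apply] at ht
      · exact hout t h
  have hzero : ∀ s, d s = 0 := by
    intro s
    by_cases h : s ∈ T.Γ1
    · obtain ⟨K, _, hK⟩ := T.nilp s h
      exact hiter K s hK
    · exact hout s h
  -- equal fiber cardinalities
  have hcard : ∀ s, (Finset.univ.filter fun k => i k = s).card
      = (Finset.univ.filter fun k => j k = s).card := by
    intro s
    have h1 : ci s = ((Finset.univ.filter fun k => i k = s).card : ℂ) := by
      simp [hci, Finset.sum_boole]
    have h2 : cj s = ((Finset.univ.filter fun k => j k = s).card : ℂ) := by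
      simp [hcj, Finset.sum_boole]
    have h3 : ci s = cj s := by
      have := hzero s; simp only [hd] at this; linear_combination this
    rw [h1, h2] at h3
    exact_mod_cast h3
  -- build the permutation from fiber equivalences
  have hfib : ∀ s : ℕ, Nonempty ({k : Fin m // i k = s} ≃ {k : Fin m // j k = s}) := by
    intro s
    apply Fintype.card_eq.mp
    rw [Fintype.card_subtype, Fintype.card_subtype]
    exact hcard s
  let e : ∀ s : ℕ, {k : Fin m // i k = s} ≃ {k : Fin m // j k = s} :=
    fun s => (hfib s).some
  refine ⟨(Equiv.ofFiberEquiv e).symm.symm.trans (Equiv.refl _), ?_⟩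
  intro k
  simpa using (Equiv.ofFiberEquiv_map e k).symm

end
end GGS
end

section
/- Let (Γ₁', Γ₂', τ') < (Γ₁, Γ₂, τ) be Belavin–Drinfeld triples (Γ₁' ⊆ Γ₁, τ' = τ restricted to Γ₁'). Let r⁰ satisfy the compatibility equations for the larger triple; then r⁰ also satisfies them for the smaller triple, and: (a) if R_GGS (built from the larger triple with this r⁰) satisfies the quantum Yang–Baxter equation and the Hecke relation, then so does R'_GGS (built from the smaller triple with the same r⁰); (b) if R_J (larger triple) satisfies the quantum Yang–Baxter equation and equals R_GGS, then R'_J (smaller triple, same r⁰) satisfies the quantum Yang–Baxter equation and equals R'_GGS. -/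
namespace GGS

open Finset
open scoped Classical

noncomputable section

variable {n : ℕ}

section Gen
variable {ι : Type*} [Fintype ι] [DecidableEq ι] (w : ι → ℤ)

/-- Projection onto weight-zero part. -/
def ZP (M : Matrix ι ι ℂ) : Matrix ι ι ℂ := fun p q => if w p = w q then M p q else 0

/-- Nonnegative weight support. -/
def NNP (M : Matrix ι ι ℂ) : Prop := ∀ p q, M p q ≠ 0 → w q ≤ w p

variable {w}

lemma NNP_zero : NNP w (0 : Matrix ι ι ℂ) := fun p q h => absurd rfl h

lemma NNP_one : NNP w (1 : Matrix ι ι ℂ) := by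
  intro p q h
  by_cases hpq : p = q
  · exact le_of_eq (by rw [hpq])
  · exact absurd (Matrix.one_apply_ne hpq) h

lemma NNP_add {A B : Matrix ι ι ℂ} (hA : NNP w A) (hB : NNP w B) : NNP w (A + B) := by
  intro p q h
  by_cases h1 : A p q = 0
  · exact hB p q (by simpa [Matrix.add_apply, h1] using h)
  · exact hA p q h1

lemma NNP_neg {A : Matrix ι ι ℂ} (hA : NNP w A) : NNP w (-A) := by
  intro p q h
  exact hA p q (by simpa using h)

lemma NNP_sub {A B : Matrix ι ι ℂ} (hA : NNP w A) (hB : NNP w B) : NNP w (A - B) := by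
  rw [sub_eq_add_neg]; exact NNP_add hA (NNP_neg hB)

lemma NNP_smul {A : Matrix ι ι ℂ} (c : ℂ) (hA : NNP w A) : NNP w (c • A) := by
  intro p q h
  exact hA p q fun h0 => h (by simp [Matrix.smul_apply, h0])

lemma NNP_mul {A B : Matrix ι ι ℂ} (hA : NNP w A) (hB : NNP w B) : NNP w (A * B) := by
  intro p q h
  rw [Matrix.mul_apply] at h
  obtain ⟨r, -, hr⟩ := Finset.exists_ne_zero_of_sum_ne_zero h
  exact le_trans (hB r q (right_ne_zero_of_mul hr)) (hA p r (left_ne_zero_of_mul hr))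

lemma NNP_sum {s : Finset α} {f : α → Matrix ι ι ℂ} (h : ∀ a ∈ s, NNP w (f a)) :
    NNP w (∑ a ∈ s, f a) := by
  classical
  induction s using Finset.induction_on with
  | empty => simpa using NNP_zero
  | insert _ _ hx ih =>
      rw [Finset.sum_insert hx]
      exact NNP_add (h _ (Finset.mem_insert_self _ _))
        (ih fun a ha => h a (Finset.mem_insert_of_mem ha))

lemma NNP_pow {A : Matrix ι ι ℂ} (hA : NNP w A) (k : ℕ) : NNP w (A ^ k) := by
  induction k with
  | zero => simpa using NNP_one
  | succ k ih => rw [pow_succ]; exact NNP_mul ih hA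

lemma ZP_zero : ZP w (0 : Matrix ι ι ℂ) = 0 := by
  funext p q; simp [ZP]

lemma ZP_one : ZP w (1 : Matrix ι ι ℂ) = 1 := by
  funext p q
  by_cases hpq : p = q
  · simp [ZP, hpq]
  · simp [ZP, Matrix.one_apply_ne hpq]

lemma ZP_add (A B : Matrix ι ι ℂ) : ZP w (A + B) = ZP w A + ZP w B := by
  funext p q; simp only [ZP, Matrix.add_apply]; split <;> simp

lemma ZP_neg (A : Matrix ι ι ℂ) : ZP w (-A) = -(ZP w A) := by
  funext p q; simp only [ZP, Matrix.neg_apply]; split <;> simp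

lemma ZP_sub (A B : Matrix ι ι ℂ) : ZP w (A - B) = ZP w A - ZP w B := by
  simp [sub_eq_add_neg, ZP_add, ZP_neg]

lemma ZP_smul (c : ℂ) (A : Matrix ι ι ℂ) : ZP w (c • A) = c • ZP w A := by
  funext p q; simp only [ZP, Matrix.smul_apply]; split <;> simp

lemma ZP_sum {s : Finset α} (f : α → Matrix ι ι ℂ) :
    ZP w (∑ a ∈ s, f a) = ∑ a ∈ s, ZP w (f a) := by
  classical
  induction s using Finset.induction_on with
  | empty => simpa using ZP_zero
  | insert _ _ hx ih => rw [Finset.sum_insert hx, Finset.sum_insert hx, ZP_add, ih]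

lemma ZP_mul {A B : Matrix ι ι ℂ} (hA : NNP w A) (hB : NNP w B) :
    ZP w (A * B) = ZP w A * ZP w B := by
  funext p q
  simp only [ZP, Matrix.mul_apply]
  by_cases hpq : w p = w q
  · rw [if_pos hpq]
    apply Finset.sum_congr rfl
    intro r _
    by_cases hr : w p = w r
    · rw [if_pos hr, if_pos (hr ▸ hpq)]
    · rw [if_neg hr]
      by_cases h1 : A p r = 0
      · simp [h1]
      · have h2 : B r q = 0 := by
          by_contra h2
          exact hr (le_antisymm (hpq ▸ hB r q h2) (hA p r h1))
        simp [h2]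
  · rw [if_neg hpq]
    symm
    apply Finset.sum_eq_zero
    intro r _
    by_cases hr : w p = w r
    · rw [if_neg (fun h => hpq (hr.trans h))]; simp
    · rw [if_neg hr]; simp

lemma ZP_pow {A : Matrix ι ι ℂ} (hA : NNP w A) (k : ℕ) : ZP w (A ^ k) = (ZP w A) ^ k := by
  induction k with
  | zero => simpa using ZP_one
  | succ k ih => rw [pow_succ, pow_succ, ZP_mul (NNP_pow hA k) hA, ih]

/-- If `J` has an inverse supported in nonnegative weights (and `J` itself is `NNP`),
then `ZP` of the inverse is the inverse of `ZP`. -/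
lemma ZP_inv {J B : Matrix ι ι ℂ} (hJ : NNP w J) (hB : NNP w B)
    (h1 : J * B = 1) (h2 : B * J = 1) :
    (ZP w J)⁻¹ = ZP w B ∧ J⁻¹ = B := by
  have e1 : ZP w J * ZP w B = 1 := by rw [← ZP_mul hJ hB, h1, ZP_one]
  exact ⟨Matrix.inv_eq_right_inv e1, Matrix.inv_eq_right_inv h1⟩

end Gen



section Comb
variable {n : ℕ}

lemma sum_indicator_card (s : Finset ℕ) (g : ℕ → ℕ) (y : ℕ) :
    (∑ m ∈ s, (if y = g m then (1:ℂ) else 0)) = ((s.filter fun m => g m = y).card : ℂ) := by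
  rw [Finset.sum_boole]
  norm_cast
  congr 1
  ext m
  simp [Finset.mem_filter, eq_comm]

lemma count_lemma {i j k l : ℕ} (g : ℕ → ℕ) (hkl : k < l)
    (h : rvec k l = ∑ m ∈ Finset.Ico i j, svec (g m)) (x : ℕ) :
    ((Finset.Ico i j).filter fun m => g m = x).card = if k ≤ x ∧ x < l then 1 else 0 := by
  have key : ∀ y : ℕ, (((Finset.Ico i j).filter fun m => g m = y).card : ℂ)
      = (if y = k then 1 else 0) - (if y = l then 1 else 0)
        + (if y = 0 then 0 else (((Finset.Ico i j).filter fun m => g m = y - 1).card : ℂ)) := by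
    intro y
    have hy := congrFun h y
    simp only [rvec, svec, Pi.sub_apply, evec, Finset.sum_apply, Finset.sum_sub_distrib] at hy
    rw [sum_indicator_card] at hy
    have h2 : (∑ m ∈ Finset.Ico i j, (if y = g m + 1 then (1:ℂ) else 0))
        = (if y = 0 then 0 else (((Finset.Ico i j).filter fun m => g m = y - 1).card : ℂ)) := by
      rcases y with _ | y'
      · simp
      · rw [if_neg (Nat.succ_ne_zero y'), Nat.add_sub_cancel, ← sum_indicator_card]
        apply Finset.sum_congr rfl
        intro m _
        by_cases hgm : y' = g m
        · rw [if_pos hgm, if_pos (by omega)]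
        · rw [if_neg (by omega), if_neg hgm]
    rw [h2] at hy
    linear_combination -hy
  -- now prove the closed form by induction
  have main : ∀ y : ℕ, (((Finset.Ico i j).filter fun m => g m = y).card : ℂ)
      = if k ≤ y ∧ y < l then 1 else 0 := by
    intro y
    induction y with
    | zero =>
        rw [key 0]
        split_ifs <;> (first | ring1 | exact (‹False›).elim | (exfalso; omega))
    | succ y' ih =>
        rw [key (y' + 1), Nat.add_sub_cancel, ih]
        split_ifs <;> (first | ring1 | exact (‹False›).elim | (exfalso; omega))
  have := main x
  by_cases hx : k ≤ x ∧ x < l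
  · rw [if_pos hx] at this ⊢; exact_mod_cast this
  · rw [if_neg hx] at this ⊢; exact_mod_cast this

/-- consequences of `count_lemma` : `g` maps `[i,j)` into `[k,l)` … -/
lemma count_mapsTo {i j k l : ℕ} (g : ℕ → ℕ) (hkl : k < l)
    (h : rvec k l = ∑ m ∈ Finset.Ico i j, svec (g m))
    {m : ℕ} (hm : m ∈ Finset.Ico i j) : g m ∈ Finset.Ico k l := by
  have := count_lemma g hkl h (g m)
  by_contra hc
  have hmem : m ∈ (Finset.Ico i j).filter fun m' => g m' = g m :=
    Finset.mem_filter.mpr ⟨hm, rfl⟩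
  have h1 : 1 ≤ ((Finset.Ico i j).filter fun m' => g m' = g m).card :=
    Finset.card_pos.mpr ⟨m, hmem⟩
  rw [this] at h1
  rw [Finset.mem_Ico] at hc
  rw [if_neg hc] at h1
  omega

/-- … injectively … -/
lemma count_injOn {i j k l : ℕ} (g : ℕ → ℕ) (hkl : k < l)
    (h : rvec k l = ∑ m ∈ Finset.Ico i j, svec (g m))
    {m m' : ℕ} (hm : m ∈ Finset.Ico i j) (hm' : m' ∈ Finset.Ico i j)
    (he : g m = g m') : m = m' := by
  have hcnt := count_lemma g hkl h (g m)
  have hle : ((Finset.Ico i j).filter fun a => g a = g m).card ≤ 1 := by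
    rw [hcnt]; split <;> omega
  rw [Finset.card_le_one] at hle
  exact hle m (Finset.mem_filter.mpr ⟨hm, rfl⟩) m' (Finset.mem_filter.mpr ⟨hm', he.symm⟩)

/-- … surjectively. -/
lemma count_surjOn {i j k l : ℕ} (g : ℕ → ℕ) (hkl : k < l)
    (h : rvec k l = ∑ m ∈ Finset.Ico i j, svec (g m))
    {x : ℕ} (hx : x ∈ Finset.Ico k l) : ∃ m ∈ Finset.Ico i j, g m = x := by
  have hcnt := count_lemma g hkl h x
  rw [Finset.mem_Ico] at hx
  rw [if_pos hx] at hcnt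
  have : ((Finset.Ico i j).filter fun a => g a = x).Nonempty := by
    rw [← Finset.card_pos, hcnt]; omega
  obtain ⟨m, hm⟩ := this
  rw [Finset.mem_filter] at hm
  exact ⟨m, hm.1, hm.2⟩

lemma rvec_inj_s6 {k l k' l' : ℕ} (hkl : k < l) (hkl' : k' < l')
    (h : rvec k l = rvec k' l') : k = k' ∧ l = l' := by
  have hk := congrFun h k
  have hl := congrFun h l
  simp only [rvec, Pi.sub_apply, evec] at hk hl
  rw [if_neg (by omega : ¬ k = l)] at hk
  rw [if_neg (by omega : ¬ l = k)] at hl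
  norm_num at hk hl
  constructor
  · by_contra hc
    rw [if_neg hc] at hk
    split_ifs at hk <;> norm_num at hk
  · by_contra hc
    rw [if_neg hc] at hl
    split_ifs at hl <;> norm_num at hl

end Comb



section Chains
variable {n : ℕ}

lemma precK_zero_iff (T : BDTriple n) (p q : ℕ × ℕ) : precK T 0 p q ↔ p = q := Iff.rfl

lemma precK_succ_iff (T : BDTriple n) (k : ℕ) (p q : ℕ × ℕ) :
    precK T (k + 1) p q ↔ ∃ r, tauStep T p r ∧ precK T k r q := Iff.rfl

lemma tauStep_det {T : BDTriple n} {p r r' : ℕ × ℕ} (h : tauStep T p r) (h' : tauStep T p r') :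
    r = r' := by
  obtain ⟨-, hlt, hsum⟩ := h
  obtain ⟨-, hlt', hsum'⟩ := h'
  have := rvec_inj_s6 hlt hlt' (hsum.trans hsum'.symm)
  exact Prod.ext this.1 this.2

lemma precK_det {T : BDTriple n} : ∀ {m : ℕ} {p q q' : ℕ × ℕ},
    precK T m p q → precK T m p q' → q = q' := by
  intro m
  induction m with
  | zero => intro p q q' h h'; exact h.symm.trans h'
  | succ m ih =>
      intro p q q' h h'
      rw [precK_succ_iff] at h h'
      obtain ⟨r, hr, h2⟩ := h
      obtain ⟨r', hr', h2'⟩ := h'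
      rw [tauStep_det hr hr'] at h2
      exact ih h2 h2'

lemma precK_add_iff (T : BDTriple n) (a b : ℕ) (p r : ℕ × ℕ) :
    precK T (a + b) p r ↔ ∃ s, precK T a p s ∧ precK T b s r := by
  induction a generalizing p with
  | zero =>
      rw [Nat.zero_add]
      exact ⟨fun h => ⟨p, rfl, h⟩, fun ⟨s, hs, h⟩ => by rwa [← hs] at h⟩
  | succ a ih =>
      constructor
      · intro h
        rw [Nat.succ_add, precK_succ_iff] at h
        obtain ⟨t, ht, h2⟩ := h
        obtain ⟨s, h3, h4⟩ := (ih (p := t)).mp h2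
        exact ⟨s, (precK_succ_iff T a p s).mpr ⟨t, ht, h3⟩, h4⟩
      · rintro ⟨s, hps, hsr⟩
        rw [precK_succ_iff] at hps
        obtain ⟨t, ht, h3⟩ := hps
        rw [Nat.succ_add, precK_succ_iff]
        exact ⟨t, ht, (ih (p := t)).mpr ⟨s, h3, hsr⟩⟩

lemma precK_span {T : BDTriple n} {m : ℕ} (hm : 1 ≤ m) {p r : ℕ × ℕ}
    (h : precK T m p r) : SpanRoot T p.1 p.2 := by
  obtain ⟨m', rfl⟩ : ∃ m', m = m' + 1 := ⟨m - 1, by omega⟩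
  rw [precK_succ_iff] at h
  obtain ⟨t, ht, -⟩ := h
  exact ht.1

lemma precK_lt {T : BDTriple n} : ∀ {m : ℕ} {p r : ℕ × ℕ}, 1 ≤ m →
    precK T m p r → r.1 < r.2 := by
  intro m
  induction m with
  | zero => omega
  | succ m ih =>
      intro p r _ h
      rw [precK_succ_iff] at h
      obtain ⟨t, ht, h2⟩ := h
      rcases Nat.eq_zero_or_pos m with hm | hm
      · subst hm; rw [precK_zero_iff] at h2; rw [← h2]; exact ht.2.1
      · exact ih hm h2

lemma tauStep_maps {T : BDTriple n} {p r : ℕ × ℕ} (h : tauStep T p r) {x : ℕ}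
    (hx : x ∈ Finset.Ico p.1 p.2) : T.τ x ∈ Finset.Ico r.1 r.2 :=
  count_mapsTo T.τ h.2.1 h.2.2 hx

lemma spanRoot_mem {T : BDTriple n} {i j : ℕ} (h : SpanRoot T i j) {x : ℕ}
    (hx : x ∈ Finset.Ico i j) : x ∈ T.Γ1 := by
  rw [Finset.mem_Ico] at hx
  exact h.2 x hx.1 hx.2

lemma precK_iter_mem {T : BDTriple n} : ∀ {m : ℕ} {p r : ℕ × ℕ}, precK T m p r →
    ∀ x ∈ Finset.Ico p.1 p.2, ∀ i < m, T.τ^[i] x ∈ T.Γ1 := by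
  intro m
  induction m with
  | zero => intro p r h x hx i hi; omega
  | succ m ih =>
      intro p r h x hx i hi
      rw [precK_succ_iff] at h
      obtain ⟨t, ht, h2⟩ := h
      rcases i with _ | i'
      · simpa using spanRoot_mem ht.1 hx
      · rw [Function.iterate_succ_apply]
        exact ih h2 (T.τ x) (tauStep_maps ht hx) i' (by omega)

lemma precK_cycle_pow {T : BDTriple n} {m : ℕ} {r : ℕ × ℕ} (h : precK T m r r) :
    ∀ c : ℕ, precK T (c * m) r r := by
  intro c
  induction c with
  | zero => rw [Nat.zero_mul]; exact rfl
  | succ c ih =>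
      have : (c + 1) * m = c * m + m := by ring
      rw [this, precK_add_iff]
      exact ⟨r, ih, h⟩

lemma precK_no_cycle {T : BDTriple n} {m : ℕ} (hm : 1 ≤ m) {r : ℕ × ℕ}
    (h : precK T m r r) : False := by
  have hspan := precK_span hm h
  have hr1 : r.1 ∈ T.Γ1 := hspan.2 r.1 le_rfl hspan.1
  obtain ⟨k, hk1, hk⟩ := T.nilp r.1 hr1
  have hkm := precK_cycle_pow h (k + 1)
  have : T.τ^[k] r.1 ∈ T.Γ1 := by
    apply precK_iter_mem hkm r.1 _ k _
    · rw [Finset.mem_Ico]; exact ⟨le_rfl, hspan.1⟩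
    · calc k < k + 1 := by omega
        _ ≤ (k + 1) * m := by nlinarith
  exact hk this

lemma precK_unique_aux {T : BDTriple n} {a b : ℕ} {p r : ℕ × ℕ} (hab : a < b)
    (ha : precK T a p r) (hb : precK T b p r) : False := by
  have : b = a + (b - a) := by omega
  rw [this, precK_add_iff] at hb
  obtain ⟨s, hs, h2⟩ := hb
  rw [precK_det ha hs] at h2
  exact precK_no_cycle (by omega) h2

lemma precK_unique {T : BDTriple n} {a b : ℕ} {p r : ℕ × ℕ}
    (ha : precK T a p r) (hb : precK T b p r) : a = b := by
  rcases lt_trichotomy a b with h | h | h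
  · exact absurd (precK_unique_aux h ha hb) not_false
  · exact h
  · exact absurd (precK_unique_aux h hb ha) not_false

end Chains

section Lift
variable {n : ℕ} {T T' : BDTriple n}
variable (hsub : T'.Γ1 ⊆ T.Γ1) (htau : ∀ s ∈ T'.Γ1, T'.τ s = T.τ s)
include hsub htau

omit htau in
lemma spanRoot_lift {i j : ℕ} (h : SpanRoot T' i j) : SpanRoot T i j :=
  ⟨h.1, fun k h1 h2 => hsub (h.2 k h1 h2)⟩

lemma tauStep_lift {p r : ℕ × ℕ} (h : tauStep T' p r) : tauStep T p r := by
  refine ⟨spanRoot_lift hsub h.1, h.2.1, ?_⟩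
  rw [h.2.2]
  apply Finset.sum_congr rfl
  intro k hk
  rw [htau k (spanRoot_mem h.1 hk)]

lemma precK_lift : ∀ {m : ℕ} {p r : ℕ × ℕ}, precK T' m p r → precK T m p r := by
  intro m
  induction m with
  | zero => exact fun h => h
  | succ m ih =>
      intro p r h
      rw [precK_succ_iff] at h ⊢
      obtain ⟨t, ht, h2⟩ := h
      exact ⟨t, tauStep_lift hsub htau ht, ih h2⟩

lemma prec_lift {p r : ℕ × ℕ} (h : prec T' p r) : prec T p r := by
  obtain ⟨k, hk⟩ := h
  exact ⟨k, precK_lift hsub htau hk⟩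

lemma iter_eq : ∀ {m : ℕ} {p r : ℕ × ℕ}, precK T' m p r →
    ∀ x ∈ Finset.Ico p.1 p.2, ∀ j ≤ m, T.τ^[j] x = T'.τ^[j] x := by
  intro m
  induction m with
  | zero =>
      intro p r h x hx j hj
      interval_cases j
      simp
  | succ m ih =>
      intro p r h x hx j hj
      rw [precK_succ_iff] at h
      obtain ⟨t, ht, h2⟩ := h
      rcases j with _ | j'
      · simp
      · rw [Function.iterate_succ_apply, Function.iterate_succ_apply]
        have hx1 : x ∈ T'.Γ1 := spanRoot_mem ht.1 hx
        rw [← htau x hx1]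
        exact ih h2 (T'.τ x) (tauStep_maps ht hx) j' (by omega)

end Lift



section Weight
variable {n : ℕ}

/-- number of non-primed steps in the backward `τ`-history of `j`. -/
def cw (T T' : BDTriple n) (j : ℕ) : ℕ :=
  ((T.Γ1 \ T'.Γ1).filter fun k =>
    ∃ m, 1 ≤ m ∧ T.τ^[m] k = j ∧ ∀ i < m, T.τ^[i] k ∈ T.Γ1).card

/-- the weights on basis vectors. -/
def lamw (T T' : BDTriple n) (x : ℕ) : ℤ := -(∑ k ∈ range x, (cw T T' k : ℤ))

/-- the weight of a root. -/
def fw (T T' : BDTriple n) (p : ℕ × ℕ) : ℤ := lamw T T' p.1 - lamw T T' p.2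

lemma lamw_sub {T T' : BDTriple n} {i j : ℕ} (hij : i ≤ j) :
    lamw T T' i - lamw T T' j = ∑ k ∈ Finset.Ico i j, (cw T T' k : ℤ) := by
  rw [Finset.sum_Ico_eq_sub _ hij, lamw, lamw]
  ring

lemma no_tau_cycle (T : BDTriple n) {k m : ℕ} (hk : k ∈ T.Γ1) (hm : 1 ≤ m)
    (hcyc : T.τ^[m] k = k) (hchain : ∀ i < m, T.τ^[i] k ∈ T.Γ1) : False := by
  have key : ∀ i : ℕ, ∃ j < m, T.τ^[i] k = T.τ^[j] k ∧ T.τ^[i] k ∈ T.Γ1 := by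
    intro i
    induction i with
    | zero => exact ⟨0, by omega, rfl, by simpa using hk⟩
    | succ i ih =>
        obtain ⟨j, hj, he, hmem⟩ := ih
        rcases Nat.lt_or_ge (j + 1) m with h1 | h1
        · refine ⟨j + 1, h1, ?_, ?_⟩
          · rw [Function.iterate_succ_apply', Function.iterate_succ_apply', he]
          · rw [Function.iterate_succ_apply', he, ← Function.iterate_succ_apply' T.τ j k]
            exact hchain (j+1) h1
        · have hjm : j + 1 = m := by omega
          refine ⟨0, by omega, ?_, ?_⟩
          · rw [Function.iterate_succ_apply', he, ← Function.iterate_succ_apply' T.τ j k]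
            simp only [Nat.succ_eq_add_one, hjm, hcyc]
            simp
          · rw [Function.iterate_succ_apply', he, ← Function.iterate_succ_apply' T.τ j k]
            simp only [Nat.succ_eq_add_one, hjm, hcyc]
            exact hk
  obtain ⟨kk, hkk1, hkk⟩ := T.nilp k hk
  obtain ⟨j, hj, he, hmem⟩ := key kk
  exact hkk (he ▸ hmem)

lemma cw_step {T T' : BDTriple n} (hsub : T'.Γ1 ⊆ T.Γ1) {k : ℕ} (hk : k ∈ T.Γ1) :
    (cw T T' (T.τ k) : ℤ) = (cw T T' k : ℤ) + (if k ∈ T'.Γ1 then 0 else 1) := by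
  classical
  have hfilter : ((T.Γ1 \ T'.Γ1).filter fun k' =>
        ∃ m, 1 ≤ m ∧ T.τ^[m] k' = T.τ k ∧ ∀ i < m, T.τ^[i] k' ∈ T.Γ1)
      = ((T.Γ1 \ T'.Γ1).filter fun k' =>
          ∃ m, 1 ≤ m ∧ T.τ^[m] k' = k ∧ ∀ i < m, T.τ^[i] k' ∈ T.Γ1)
        ∪ ((T.Γ1 \ T'.Γ1).filter fun k' => k' = k) := by
    rw [← Finset.filter_or]
    apply Finset.filter_congr
    intro k' hk'
    have hk'1 : k' ∈ T.Γ1 := (Finset.mem_sdiff.mp hk').1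
    constructor
    · rintro ⟨m, hm1, hme, hmc⟩
      rcases Nat.lt_or_ge m 2 with h2 | h2
      · have hm : m = 1 := by omega
        subst hm
        right
        apply T.bij.injOn (by simpa using hk'1) (by simpa using hk)
        simpa using hme
      · left
        refine ⟨m - 1, by omega, ?_, fun i hi => hmc i (by omega)⟩
        have he2 : T.τ^[m] k' = T.τ (T.τ^[m-1] k') := by
          rw [← Function.iterate_succ_apply' T.τ (m-1) k']
          congr 1
          omega
        rw [he2] at hme
        exact T.bij.injOn (by simpa using hmc (m-1) (by omega)) (by simpa using hk) hme
    · rintro (⟨m, hm1, hme, hmc⟩ | rfl)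
      · refine ⟨m + 1, by omega, ?_, ?_⟩
        · rw [Function.iterate_succ_apply', hme]
        · intro i hi
          rcases Nat.lt_or_ge i m with h | h
          · exact hmc i h
          · have hiem : i = m := by omega
            rw [hiem, hme]
            exact hk
      · exact ⟨1, le_rfl, by simp, by intro i hi; interval_cases i; simpa using hk'1⟩
  have hdisj : Disjoint
      ((T.Γ1 \ T'.Γ1).filter fun k' =>
        ∃ m, 1 ≤ m ∧ T.τ^[m] k' = k ∧ ∀ i < m, T.τ^[i] k' ∈ T.Γ1)
      ((T.Γ1 \ T'.Γ1).filter fun k' => k' = k) := by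
    rw [Finset.disjoint_right]
    intro a ha hb
    rw [Finset.mem_filter] at ha hb
    obtain ⟨m, hm1, hme, hmc⟩ := ha.2 ▸ hb.2
    exact no_tau_cycle T hk hm1 hme hmc
  rw [cw, hfilter, Finset.card_union_of_disjoint hdisj, Finset.filter_eq']
  by_cases hk2 : k ∈ T'.Γ1
  · rw [if_neg (fun hc => (Finset.mem_sdiff.mp hc).2 hk2), if_pos hk2]
    simp [cw]
  · rw [if_pos (Finset.mem_sdiff.mpr ⟨hk, hk2⟩), if_neg hk2]
    simp [cw]

lemma fw_tauStep {T T' : BDTriple n} {p r : ℕ × ℕ} (h : tauStep T p r) :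
    fw T T' r - fw T T' p
      = ∑ k ∈ Finset.Ico p.1 p.2, ((cw T T' (T.τ k) : ℤ) - cw T T' k) := by
  have hp : p.1 < p.2 := h.1.1
  have hr : r.1 < r.2 := h.2.1
  have hrsum : (∑ m ∈ Finset.Ico r.1 r.2, (cw T T' m : ℤ))
      = ∑ k ∈ Finset.Ico p.1 p.2, (cw T T' (T.τ k) : ℤ) := by
    symm
    apply Finset.sum_bij (fun m _ => T.τ m)
    · intro a ha
      exact tauStep_maps h ha
    · intro a ha b hb he
      exact count_injOn T.τ h.2.1 h.2.2 ha hb he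
    · intro b hb
      obtain ⟨m, hm, he⟩ := count_surjOn T.τ h.2.1 h.2.2 hb
      exact ⟨m, hm, he⟩
    · intro a ha
      rfl
  rw [fw, fw, show lamw T T' r.1 - lamw T T' r.2 - (lamw T T' p.1 - lamw T T' p.2)
      = (lamw T T' r.1 - lamw T T' r.2) - (lamw T T' p.1 - lamw T T' p.2) by ring,
    lamw_sub (le_of_lt hr), lamw_sub (le_of_lt hp), hrsum, ← Finset.sum_sub_distrib]

lemma fw_step_le {T T' : BDTriple n} (hsub : T'.Γ1 ⊆ T.Γ1) {p r : ℕ × ℕ}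
    (h : tauStep T p r) : fw T T' p ≤ fw T T' r := by
  have hd := fw_tauStep (T' := T') h
  have hnn : ∀ k ∈ Finset.Ico p.1 p.2, (0:ℤ) ≤ (cw T T' (T.τ k) : ℤ) - cw T T' k := by
    intro k hk
    rw [cw_step hsub (spanRoot_mem h.1 hk)]
    split <;> omega
  have := Finset.sum_nonneg hnn
  omega

lemma fw_step_eq_iff {T T' : BDTriple n} (hsub : T'.Γ1 ⊆ T.Γ1)
    (htau : ∀ s ∈ T'.Γ1, T'.τ s = T.τ s) {p r : ℕ × ℕ} (h : tauStep T p r) :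
    fw T T' p = fw T T' r ↔ tauStep T' p r := by
  have hd := fw_tauStep (T' := T') h
  constructor
  · intro heq
    rw [heq, sub_self] at hd
    have hall : ∀ k ∈ Finset.Ico p.1 p.2, k ∈ T'.Γ1 := by
      intro k hk
      have hnn : ∀ k ∈ Finset.Ico p.1 p.2, (0:ℤ) ≤ (cw T T' (T.τ k) : ℤ) - cw T T' k := by
        intro k hk
        rw [cw_step hsub (spanRoot_mem h.1 hk)]
        split <;> omega
      have h0 := (Finset.sum_eq_zero_iff_of_nonneg hnn).mp hd.symm k hk
      rw [cw_step hsub (spanRoot_mem h.1 hk)] at h0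
      by_contra hc
      rw [if_neg hc] at h0
      omega
    have hspan' : SpanRoot T' p.1 p.2 :=
      ⟨h.1.1, fun k h1 h2 => hall k (Finset.mem_Ico.mpr ⟨h1, h2⟩)⟩
    refine ⟨hspan', h.2.1, ?_⟩
    rw [h.2.2]
    apply Finset.sum_congr rfl
    intro k hk
    rw [htau k (hall k hk)]
  · intro h'
    have h0 : ∑ k ∈ Finset.Ico p.1 p.2, ((cw T T' (T.τ k) : ℤ) - cw T T' k) = 0 := by
      apply Finset.sum_eq_zero
      intro k hk
      rw [cw_step hsub (spanRoot_mem h.1 hk), if_pos (spanRoot_mem h'.1 hk)]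
      ring
    rw [h0] at hd
    omega

lemma fw_chain_le {T T' : BDTriple n} (hsub : T'.Γ1 ⊆ T.Γ1) :
    ∀ {m : ℕ} {p r : ℕ × ℕ}, precK T m p r → fw T T' p ≤ fw T T' r := by
  intro m
  induction m with
  | zero => intro p r h; rw [h]
  | succ m ih =>
      intro p r h
      rw [precK_succ_iff] at h
      obtain ⟨t, ht, h2⟩ := h
      exact le_trans (fw_step_le hsub ht) (ih h2)

lemma fw_chain_eq {T T' : BDTriple n} (hsub : T'.Γ1 ⊆ T.Γ1)
    (htau : ∀ s ∈ T'.Γ1, T'.τ s = T.τ s) :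
    ∀ {m : ℕ} {p r : ℕ × ℕ}, precK T m p r → fw T T' p = fw T T' r →
      precK T' m p r := by
  intro m
  induction m with
  | zero => intro p r h _; exact h
  | succ m ih =>
      intro p r h heq
      rw [precK_succ_iff] at h
      obtain ⟨t, ht, h2⟩ := h
      have h1 : fw T T' p ≤ fw T T' t := fw_step_le hsub ht
      have h3 : fw T T' t ≤ fw T T' r := fw_chain_le hsub h2
      have e1 : fw T T' p = fw T T' t := by omega
      have e2 : fw T T' t = fw T T' r := by omega
      rw [precK_succ_iff]
      exact ⟨t, (fw_step_eq_iff hsub htau ht).mp e1, ih h2 e2⟩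

lemma fw_primed_eq {T T' : BDTriple n} (hsub : T'.Γ1 ⊆ T.Γ1)
    (htau : ∀ s ∈ T'.Γ1, T'.τ s = T.τ s) :
    ∀ {m : ℕ} {p r : ℕ × ℕ}, precK T' m p r → fw T T' p = fw T T' r := by
  intro m
  induction m with
  | zero => intro p r h; rw [h]
  | succ m ih =>
      intro p r h
      rw [precK_succ_iff] at h
      obtain ⟨t, ht, h2⟩ := h
      have := (fw_step_eq_iff hsub htau (tauStep_lift hsub htau ht)).mpr ht
      rw [this, ih h2]

lemma precK_fw_iff {T T' : BDTriple n} (hsub : T'.Γ1 ⊆ T.Γ1)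
    (htau : ∀ s ∈ T'.Γ1, T'.τ s = T.τ s) {m : ℕ} {p r : ℕ × ℕ}
    (h : precK T m p r) : fw T T' p = fw T T' r ↔ precK T' m p r :=
  ⟨fw_chain_eq hsub htau h, fw_primed_eq hsub htau⟩

lemma prec_fw_iff {T T' : BDTriple n} (hsub : T'.Γ1 ⊆ T.Γ1)
    (htau : ∀ s ∈ T'.Γ1, T'.τ s = T.τ s) {p r : ℕ × ℕ}
    (h : prec T p r) : fw T T' p = fw T T' r ↔ prec T' p r := by
  constructor
  · intro heq
    obtain ⟨k, hk⟩ := h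
    exact ⟨k, fw_chain_eq hsub htau hk heq⟩
  · intro h'
    obtain ⟨k, hk⟩ := h'
    exact fw_primed_eq hsub htau hk

lemma prec_fw_le {T T' : BDTriple n} (hsub : T'.Γ1 ⊆ T.Γ1) {p r : ℕ × ℕ}
    (h : prec T p r) : fw T T' p ≤ fw T T' r := by
  obtain ⟨k, hk⟩ := h
  exact fw_chain_le hsub hk

end Weight



section Equal
variable {n : ℕ} {T T' : BDTriple n}
variable (hsub : T'.Γ1 ⊆ T.Γ1) (htau : ∀ s ∈ T'.Γ1, T'.τ s = T.τ s)
include hsub htau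

lemma revOri_iff {p r : ℕ × ℕ} (hpr : prec T' p r) : RevOri T p r ↔ RevOri T' p r := by
  obtain ⟨K, hK'⟩ := hpr
  have hK : precK T (K + 1) p r := precK_lift hsub htau hK'
  have hspan' : SpanRoot T' p.1 p.2 := precK_span (by omega) hK'
  have hp12 : p.1 ∈ Finset.Ico p.1 p.2 := Finset.mem_Ico.mpr ⟨le_rfl, hspan'.1⟩
  constructor
  · rintro ⟨k, hk, hit⟩
    have he : k + 1 = K + 1 := precK_unique hk hK
    obtain rfl : k = K := by omega
    refine ⟨k, hK', ?_⟩
    rw [← iter_eq hsub htau hK' p.1 hp12 (k + 1) le_rfl]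
    exact hit
  · rintro ⟨k, hk', hit⟩
    have he : k + 1 = K + 1 := precK_unique hk' hK'
    obtain rfl : k = K := by omega
    refine ⟨k, hK, ?_⟩
    rw [iter_eq hsub htau hK' p.1 hp12 (k + 1) le_rfl]
    exact hit

lemma sgn_eq {p r : ℕ × ℕ} (hpr : prec T' p r) : sgn T p r = sgn T' p r := by
  unfold sgn
  by_cases h : RevOri T' p r
  · rw [if_pos h, if_pos ((revOri_iff hsub htau hpr).mpr h)]
  · rw [if_neg h, if_neg (fun hc => h ((revOri_iff hsub htau hpr).mp hc))]

lemma mid_iff {p r : ℕ × ℕ} (hpr : prec T' p r) (Q : ℕ × ℕ → Prop) :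
    (∃ g, prec T p g ∧ prec T g r ∧ Q g) ↔ ∃ g, prec T' p g ∧ prec T' g r ∧ Q g := by
  obtain ⟨K, hK'⟩ := hpr
  constructor
  · rintro ⟨g, ⟨a, ha⟩, ⟨b, hb⟩, hQ⟩
    have hcomp : precK T ((a + 1) + (b + 1)) p r :=
      (precK_add_iff T _ _ p r).mpr ⟨g, ha, hb⟩
    have huni : (a + 1) + (b + 1) = K + 1 := precK_unique hcomp (precK_lift hsub htau hK')
    have hsplit : ∃ s, precK T' (a + 1) p s ∧ precK T' (K - a) s r := by
      have hKe : K + 1 = (a + 1) + (K - a) := by omega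
      rw [hKe] at hK'
      exact (precK_add_iff T' _ _ p r).mp hK'
    obtain ⟨s, hs1, hs2⟩ := hsplit
    have hgs : g = s := precK_det ha (precK_lift hsub htau hs1)
    subst hgs
    have hKa : K - a = b + 1 := by omega
    rw [hKa] at hs2
    exact ⟨g, ⟨a, hs1⟩, ⟨b, hs2⟩, hQ⟩
  · rintro ⟨g, h1, h2, hQ⟩
    exact ⟨g, prec_lift hsub htau h1, prec_lift hsub htau h2, hQ⟩

lemma kc_eq {p r : ℕ × ℕ} (hpr : prec T' p r) : Kc T p r = Kc T' p r := by
  unfold Kc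
  rw [propext (mid_iff hsub htau hpr (fun g => p.2 = g.1)),
    propext (mid_iff hsub htau hpr (fun g => g.2 = p.1)),
    propext (revOri_iff hsub htau hpr)]

end Equal



section MatLayer
variable {n : ℕ} (lam : ℕ → ℤ)

@[reducible] def wt2 : Fin n × Fin n → ℤ := fun p => lam (p.1 : ℕ) + lam (p.2 : ℕ)
@[reducible] def wt3 : Fin n × Fin n × Fin n → ℤ :=
  fun p => lam (p.1 : ℕ) + lam (p.2.1 : ℕ) + lam (p.2.2 : ℕ)

lemma tensE_apply (a b c d : ℕ) (p q : Fin n × Fin n) :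
    tens (E n a b) (E n c d) p q
      = if ((p.1 : ℕ) = a ∧ (q.1 : ℕ) = b) ∧ ((p.2 : ℕ) = c ∧ (q.2 : ℕ) = d) then 1 else 0 := by
  simp only [tens, E, ite_zero_mul_ite_zero, mul_one]

lemma NN_tensE {a b c d : ℕ} (h : lam b + lam d ≤ lam a + lam c) :
    NNP (wt2 lam) (tens (E n a b) (E n c d)) := by
  intro p q hne
  rw [tensE_apply] at hne
  split at hne
  case isTrue h' =>
    obtain ⟨⟨h1, h2⟩, h3, h4⟩ := h'
    simp only [wt2, h1, h2, h3, h4]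
    exact h
  case isFalse => exact absurd rfl hne

lemma Z_tensE_eq {a b c d : ℕ} (h : lam b + lam d = lam a + lam c) :
    ZP (wt2 lam) (tens (E n a b) (E n c d)) = tens (E n a b) (E n c d) := by
  funext p q
  rw [ZP]
  split
  case isTrue => rfl
  case isFalse hng =>
    rw [tensE_apply, if_neg]
    rintro ⟨⟨h1, h2⟩, h3, h4⟩
    exact hng (by simp only [wt2, h1, h2, h3, h4]; omega)

lemma Z_tensE_ne {a b c d : ℕ} (h : lam b + lam d ≠ lam a + lam c) :
    ZP (wt2 lam) (tens (E n a b) (E n c d)) = 0 := by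
  funext p q
  rw [ZP]
  split
  case isFalse => rfl
  case isTrue heq =>
    rw [tensE_apply, if_neg]
    · rfl
    rintro ⟨⟨h1, h2⟩, h3, h4⟩
    apply h
    simp only [wt2, h1, h2, h3, h4] at heq
    omega

lemma NNP_swap {M : MatT n} (h : NNP (wt2 lam) M) : NNP (wt2 lam) (swap21 M) := by
  intro p q hne
  have := h (p.2, p.1) (q.2, q.1) hne
  simp only [wt2] at this ⊢
  omega

lemma ZP_swap (M : MatT n) : ZP (wt2 lam) (swap21 M) = swap21 (ZP (wt2 lam) M) := by
  funext p q
  simp only [ZP, swap21, wt2]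
  by_cases h : lam (p.1 : ℕ) + lam (p.2 : ℕ) = lam (q.1 : ℕ) + lam (q.2 : ℕ)
  · rw [if_pos h, if_pos (by omega)]
  · rw [if_neg h, if_neg (by omega)]

lemma NN3_lift12 {M : MatT n} (h : NNP (wt2 lam) M) : NNP (wt3 lam) (lift12 M) := by
  intro p q hne
  rw [lift12] at hne
  have h1 : M (p.1, p.2.1) (q.1, q.2.1) ≠ 0 := left_ne_zero_of_mul hne
  have h2 : p.2.2 = q.2.2 := by
    by_contra hc
    rw [if_neg hc, mul_zero] at hne
    exact hne rfl
  have := h _ _ h1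
  simp only [wt2] at this
  simp only [wt3, h2]
  omega

lemma NN3_lift13 {M : MatT n} (h : NNP (wt2 lam) M) : NNP (wt3 lam) (lift13 M) := by
  intro p q hne
  rw [lift13] at hne
  have h1 : M (p.1, p.2.2) (q.1, q.2.2) ≠ 0 := left_ne_zero_of_mul hne
  have h2 : p.2.1 = q.2.1 := by
    by_contra hc
    rw [if_neg hc, mul_zero] at hne
    exact hne rfl
  have := h _ _ h1
  simp only [wt2] at this
  simp only [wt3, h2]
  omega

lemma NN3_lift23 {M : MatT n} (h : NNP (wt2 lam) M) : NNP (wt3 lam) (lift23 M) := by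
  intro p q hne
  rw [lift23] at hne
  have h1 : M (p.2.1, p.2.2) (q.2.1, q.2.2) ≠ 0 := left_ne_zero_of_mul hne
  have h2 : p.1 = q.1 := by
    by_contra hc
    rw [if_neg hc, mul_zero] at hne
    exact hne rfl
  have := h _ _ h1
  simp only [wt2] at this
  simp only [wt3, h2]
  omega

lemma Z3_lift12 (M : MatT n) : ZP (wt3 lam) (lift12 M) = lift12 (ZP (wt2 lam) M) := by
  funext p q
  simp only [ZP, lift12, wt2, wt3]
  by_cases hd : p.2.2 = q.2.2
  · have hiff : (lam (p.1:ℕ) + lam (p.2.1:ℕ) + lam (p.2.2:ℕ)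
        = lam (q.1:ℕ) + lam (q.2.1:ℕ) + lam (q.2.2:ℕ))
        ↔ (lam (p.1:ℕ) + lam (p.2.1:ℕ) = lam (q.1:ℕ) + lam (q.2.1:ℕ)) := by
      rw [hd]; omega
    by_cases hw : lam (p.1:ℕ) + lam (p.2.1:ℕ) = lam (q.1:ℕ) + lam (q.2.1:ℕ)
    · rw [if_pos (hiff.mpr hw), if_pos hw]
    · rw [if_neg (fun hc => hw (hiff.mp hc)), if_neg hw, zero_mul]
  · rw [if_neg hd, mul_zero, mul_zero, ite_self]

lemma Z3_lift13 (M : MatT n) : ZP (wt3 lam) (lift13 M) = lift13 (ZP (wt2 lam) M) := by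
  funext p q
  simp only [ZP, lift13, wt2, wt3]
  by_cases hd : p.2.1 = q.2.1
  · have hiff : (lam (p.1:ℕ) + lam (p.2.1:ℕ) + lam (p.2.2:ℕ)
        = lam (q.1:ℕ) + lam (q.2.1:ℕ) + lam (q.2.2:ℕ))
        ↔ (lam (p.1:ℕ) + lam (p.2.2:ℕ) = lam (q.1:ℕ) + lam (q.2.2:ℕ)) := by
      rw [hd]; omega
    by_cases hw : lam (p.1:ℕ) + lam (p.2.2:ℕ) = lam (q.1:ℕ) + lam (q.2.2:ℕ)
    · rw [if_pos (hiff.mpr hw), if_pos hw]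
    · rw [if_neg (fun hc => hw (hiff.mp hc)), if_neg hw, zero_mul]
  · rw [if_neg hd, mul_zero, mul_zero, ite_self]

lemma Z3_lift23 (M : MatT n) : ZP (wt3 lam) (lift23 M) = lift23 (ZP (wt2 lam) M) := by
  funext p q
  simp only [ZP, lift23, wt2, wt3]
  by_cases hd : p.1 = q.1
  · have hiff : (lam (p.1:ℕ) + lam (p.2.1:ℕ) + lam (p.2.2:ℕ)
        = lam (q.1:ℕ) + lam (q.2.1:ℕ) + lam (q.2.2:ℕ))
        ↔ (lam (p.2.1:ℕ) + lam (p.2.2:ℕ) = lam (q.2.1:ℕ) + lam (q.2.2:ℕ)) := by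
      rw [hd]; omega
    by_cases hw : lam (p.2.1:ℕ) + lam (p.2.2:ℕ) = lam (q.2.1:ℕ) + lam (q.2.2:ℕ)
    · rw [if_pos (hiff.mpr hw), if_pos hw]
    · rw [if_neg (fun hc => hw (hiff.mp hc)), if_neg hw, zero_mul]
  · rw [if_neg hd, mul_zero, mul_zero, ite_self]

lemma QYBE_proj {R : MatT n} (hR : NNP (wt2 lam) R) (h : QYBE R) :
    QYBE (ZP (wt2 lam) R) := by
  unfold QYBE at h ⊢
  have h12 := NN3_lift12 lam hR
  have h13 := NN3_lift13 lam hR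
  have h23 := NN3_lift23 lam hR
  have := congrArg (ZP (wt3 lam)) h
  rwa [ZP_mul (NNP_mul h12 h13) h23, ZP_mul h12 h13,
    ZP_mul (NNP_mul h23 h13) h12, ZP_mul h23 h13,
    Z3_lift12, Z3_lift13, Z3_lift23] at this

lemma NN_Pm : NNP (wt2 lam) (Pm n) := by
  apply NNP_sum
  intro i _
  apply NNP_sum
  intro j _
  exact NN_tensE lam (le_of_eq (by omega))

lemma Z_Pm : ZP (wt2 lam) (Pm n) = Pm n := by
  rw [Pm, ZP_sum]
  apply Finset.sum_congr rfl
  intro i _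
  rw [ZP_sum]
  apply Finset.sum_congr rfl
  intro j _
  exact Z_tensE_eq lam (by omega)

lemma NN_P0 : NNP (wt2 lam) (P0 n) := by
  apply NNP_sum
  intro i _
  exact NN_tensE lam (le_of_eq (by omega))

lemma Z_P0 : ZP (wt2 lam) (P0 n) = P0 n := by
  rw [P0, ZP_sum]
  apply Finset.sum_congr rfl
  intro i _
  exact Z_tensE_eq lam (by omega)

lemma Hecke_proj {R : MatT n} (q : ℝ) (hR : NNP (wt2 lam) R) (h : Hecke q R) :
    Hecke q (ZP (wt2 lam) R) := by
  unfold Hecke at h ⊢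
  have hP := NN_Pm (n := n) lam
  have h1 : NNP (wt2 lam) (Pm n * R - (q : ℂ) • (1 : MatT n)) :=
    NNP_sub (NNP_mul hP hR) (NNP_smul _ NNP_one)
  have h2 : NNP (wt2 lam) (Pm n * R + (q : ℂ)⁻¹ • (1 : MatT n)) :=
    NNP_add (NNP_mul hP hR) (NNP_smul _ NNP_one)
  have := congrArg (ZP (wt2 lam)) h
  rwa [ZP_mul h1 h2, ZP_sub, ZP_add, ZP_smul, ZP_smul, ZP_one,
    ZP_mul hP hR, Z_Pm, ZP_zero] at this

end MatLayer

section TgtSec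
variable {n : ℕ}

/-- strictly decreasing second tensor index -/
def Tgt (M : MatT n) : Prop := ∀ p q : Fin n × Fin n, M p q ≠ 0 → (q.2 : ℕ) < (p.2 : ℕ)

lemma Tgt_zero : Tgt (0 : MatT n) := fun p q h => absurd rfl h

lemma Tgt_add {A B : MatT n} (hA : Tgt A) (hB : Tgt B) : Tgt (A + B) := by
  intro p q h
  by_cases h1 : A p q = 0
  · exact hB p q (by simpa [Matrix.add_apply, h1] using h)
  · exact hA p q h1

lemma Tgt_neg {A : MatT n} (hA : Tgt A) : Tgt (-A) := by
  intro p q h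
  exact hA p q (by simpa using h)

lemma Tgt_mul {A B : MatT n} (hA : Tgt A) (hB : Tgt B) : Tgt (A * B) := by
  intro p q h
  rw [Matrix.mul_apply] at h
  obtain ⟨r, -, hr⟩ := Finset.exists_ne_zero_of_sum_ne_zero h
  exact lt_trans (hB r q (right_ne_zero_of_mul hr)) (hA p r (left_ne_zero_of_mul hr))

lemma Tgt_pow_le {M : MatT n} (hM : Tgt M) :
    ∀ (k : ℕ) (p q : Fin n × Fin n), (M ^ k) p q ≠ 0 → (q.2 : ℕ) + k ≤ (p.2 : ℕ) := by
  intro k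
  induction k with
  | zero =>
      intro p q h
      rw [pow_zero] at h
      have : p = q := by
        by_contra hc
        exact h (Matrix.one_apply_ne hc)
      rw [this]
      omega
  | succ k ih =>
      intro p q h
      rw [pow_succ, Matrix.mul_apply] at h
      obtain ⟨r, -, hr⟩ := Finset.exists_ne_zero_of_sum_ne_zero h
      have h1 := ih p r (left_ne_zero_of_mul hr)
      have h2 := hM r q (right_ne_zero_of_mul hr)
      omega

lemma Tgt_pow_zero {M : MatT n} (hM : Tgt M) : M ^ n = 0 := by
  funext p q
  by_contra hc
  have := Tgt_pow_le hM n p q hc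
  have := p.2.isLt
  omega

lemma Tgt_prod_sub_one : ∀ (L : List (MatT n)), (∀ A ∈ L, Tgt (A - 1)) →
    Tgt (L.prod - 1) := by
  intro L
  induction L with
  | nil => intro h; simpa using Tgt_zero
  | cons A L ih =>
      intro h
      rw [List.prod_cons]
      have hA : Tgt (A - 1) := h A (List.mem_cons_self)
      have hL : Tgt (L.prod - 1) := ih fun B hB => h B (List.mem_cons_of_mem A hB)
      have : A * L.prod - 1 = (A - 1) * (L.prod - 1) + (A - 1) + (L.prod - 1) := by
        noncomm_ring
      rw [this]
      exact Tgt_add (Tgt_add (Tgt_mul hA hL) hA) hL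

lemma unipotent_inv {J : MatT n} (h : Tgt (J - 1)) :
    J * (∑ k ∈ range n, (1 - J) ^ k) = 1 ∧ (∑ k ∈ range n, (1 - J) ^ k) * J = 1 := by
  have hx : (1 - J) ^ n = 0 := by
    apply Tgt_pow_zero
    have : (1 : MatT n) - J = -(J - 1) := by abel
    rw [this]
    exact Tgt_neg h
  have h1 := mul_geom_sum (1 - J) n
  have h2 := geom_sum_mul (1 - J) n
  rw [hx] at h1 h2
  constructor
  · have : J * (∑ k ∈ range n, (1 - J) ^ k)
        = -((1 - J - 1) * ∑ k ∈ range n, (1 - J) ^ k) := by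
      rw [show (1 : MatT n) - J - 1 = -J by abel]
      rw [neg_mul, neg_neg]
    rw [this, h1]
    simp
  · have : (∑ k ∈ range n, (1 - J) ^ k) * J
        = -((∑ k ∈ range n, (1 - J) ^ k) * (1 - J - 1)) := by
      rw [show (1 : MatT n) - J - 1 = -J by abel]
      rw [mul_neg, neg_neg]
    rw [this, h2]
    simp

end TgtSec

section ListProd
variable {ι : Type*} [Fintype ι] [DecidableEq ι] {w : ι → ℤ}

lemma NNP_listProd : ∀ (L : List (Matrix ι ι ℂ)), (∀ A ∈ L, NNP w A) → NNP w L.prod := by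
  intro L
  induction L with
  | nil => intro h; simpa using NNP_one
  | cons A L ih =>
      intro h
      rw [List.prod_cons]
      exact NNP_mul (h A (List.mem_cons_self))
        (ih fun B hB => h B (List.mem_cons_of_mem A hB))

lemma ZP_listProd : ∀ (L : List (Matrix ι ι ℂ)), (∀ A ∈ L, NNP w A) →
    ZP w L.prod = (L.map (ZP w)).prod := by
  intro L
  induction L with
  | nil => intro h; simpa using ZP_one
  | cons A L ih =>
      intro h
      rw [List.prod_cons, List.map_cons, List.prod_cons,
        ZP_mul (h A (List.mem_cons_self))
          (NNP_listProd L fun B hB => h B (List.mem_cons_of_mem A hB)),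
        ih fun B hB => h B (List.mem_cons_of_mem A hB)]

end ListProd



section Concrete
variable {n : ℕ} {T T' : BDTriple n}
variable (hsub : T'.Γ1 ⊆ T.Γ1) (htau : ∀ s ∈ T'.Γ1, T'.τ s = T.τ s)

/-- abbreviation for the weight function induced by the pair of triples -/
abbrev WW (T T' : BDTriple n) : Fin n × Fin n → ℤ := wt2 (lamw T T')

lemma NNP_sumRoots {w : Fin n × Fin n → ℤ} {f : ℕ × ℕ → ℕ × ℕ → MatT n}
    (h : ∀ i ∈ range n, ∀ j ∈ range n, ∀ k ∈ range n, ∀ l ∈ range n,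
      NNP w (f (i, j) (k, l))) : NNP w (sumRoots n f) := by
  apply NNP_sum; intro i hi
  apply NNP_sum; intro j hj
  apply NNP_sum; intro k hk
  apply NNP_sum; intro l hl
  exact h i hi j hj k hk l hl

lemma ZP_sumRoots {w : Fin n × Fin n → ℤ} {f g : ℕ × ℕ → ℕ × ℕ → MatT n}
    (h : ∀ i ∈ range n, ∀ j ∈ range n, ∀ k ∈ range n, ∀ l ∈ range n,
      ZP w (f (i, j) (k, l)) = g (i, j) (k, l)) :
    ZP w (sumRoots n f) = sumRoots n g := by
  rw [sumRoots, sumRoots, ZP_sum]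
  apply Finset.sum_congr rfl; intro i hi
  rw [ZP_sum]
  apply Finset.sum_congr rfl; intro j hj
  rw [ZP_sum]
  apply Finset.sum_congr rfl; intro k hk
  rw [ZP_sum]
  apply Finset.sum_congr rfl; intro l hl
  exact h i hi j hj k hk l hl

lemma NN_rsMat : NNP (WW T T') (rsMat n) := by
  apply NNP_add
  · exact NNP_smul _ (NN_P0 _)
  · apply NNP_sum; intro i _
    apply NNP_sum; intro j _
    split
    · exact NN_tensE _ (le_of_eq (by omega))
    · exact NNP_zero

lemma Z_rsMat : ZP (WW T T') (rsMat n) = rsMat n := by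
  rw [rsMat, ZP_add, ZP_smul, Z_P0, ZP_sum]
  congr 1
  apply Finset.sum_congr rfl; intro i _
  rw [ZP_sum]
  apply Finset.sum_congr rfl; intro j _
  split
  · exact Z_tensE_eq _ (by omega)
  · exact ZP_zero

lemma NN_RsQ (q : ℝ) : NNP (WW T T') (RsQ n q) := by
  apply NNP_add
  apply NNP_add
  · exact NNP_smul _ (NN_P0 _)
  · apply NNP_sum; intro i _
    apply NNP_sum; intro j _
    split
    · exact NN_tensE _ (le_of_eq (by omega))
    · exact NNP_zero
  · apply NNP_smul
    apply NNP_sum; intro i _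
    apply NNP_sum; intro j _
    split
    · exact NN_tensE _ (le_of_eq (by omega))
    · exact NNP_zero

lemma Z_RsQ (q : ℝ) : ZP (WW T T') (RsQ n q) = RsQ n q := by
  rw [RsQ, ZP_add, ZP_add, ZP_smul, Z_P0, ZP_smul]
  congr 1
  congr 1
  · rw [ZP_sum]
    apply Finset.sum_congr rfl; intro i _
    rw [ZP_sum]
    apply Finset.sum_congr rfl; intro j _
    split
    · exact Z_tensE_eq _ (by omega)
    · exact ZP_zero
  · congr 1
    rw [ZP_sum]
    apply Finset.sum_congr rfl; intro i _
    rw [ZP_sum]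
    apply Finset.sum_congr rfl; intro j _
    split
    · exact Z_tensE_eq _ (by omega)
    · exact ZP_zero

lemma NN_qr0 (q : ℝ) (r0 : ℕ → ℕ → ℂ) : NNP (WW T T') (qr0 n q r0) := by
  apply NNP_sum; intro i _
  apply NNP_sum; intro j _
  exact NNP_smul _ (NN_tensE _ (le_of_eq (by omega)))

lemma Z_qr0 (q : ℝ) (r0 : ℕ → ℕ → ℂ) : ZP (WW T T') (qr0 n q r0) = qr0 n q r0 := by
  rw [qr0, ZP_sum]
  apply Finset.sum_congr rfl; intro i _
  rw [ZP_sum]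
  apply Finset.sum_congr rfl; intro j _
  rw [ZP_smul, Z_tensE_eq _ (by omega)]

include hsub

lemma NN_aMat : NNP (WW T T') (aMat T) := by
  apply NNP_sumRoots
  intro i _ j _ k _ l _
  by_cases hpr : prec T (i, j) (k, l)
  · rw [if_pos hpr]
    dsimp only
    have hle : lamw T T' i - lamw T T' j ≤ lamw T T' k - lamw T T' l :=
      prec_fw_le (T' := T') hsub hpr
    apply NNP_smul
    apply NNP_sub
    · exact NN_tensE _ (by omega)
    · exact NN_tensE _ (by omega)
  · rw [if_neg hpr]
    exact NNP_zero

include htau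

lemma Z_aMat : ZP (WW T T') (aMat T) = aMat T' := by
  apply ZP_sumRoots
  intro i _ j _ k _ l _
  by_cases hpr : prec T (i, j) (k, l)
  · rw [if_pos hpr]
    by_cases hpr' : prec T' (i, j) (k, l)
    · have hfw : lamw T T' i - lamw T T' j = lamw T T' k - lamw T T' l :=
        (prec_fw_iff hsub htau hpr).mpr hpr'
      rw [if_pos hpr', ZP_smul, ZP_sub]
      dsimp only
      rw [Z_tensE_eq _ (by omega), Z_tensE_eq _ (by omega), sgn_eq hsub htau hpr']
    · have hfw : ¬ (lamw T T' i - lamw T T' j = lamw T T' k - lamw T T' l) :=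
        fun hc => hpr' ((prec_fw_iff hsub htau hpr).mp hc)
      rw [if_neg hpr', ZP_smul, ZP_sub]
      dsimp only
      rw [Z_tensE_ne _ (by omega), Z_tensE_ne _ (by omega)]
      simp
  · rw [if_neg hpr, if_neg (fun hc => hpr (prec_lift hsub htau hc)), ZP_zero]

lemma NN_eps : NNP (WW T T') (epsMat T) := by
  have h1 := NN_aMat (T := T) (T' := T') hsub
  have h2 := NN_rsMat (T := T) (T' := T')
  exact NNP_add (NNP_add (NNP_mul h1 h2) (NNP_mul h2 h1)) (NNP_mul h1 h1)

lemma Z_eps : ZP (WW T T') (epsMat T) = epsMat T' := by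
  have h1 := NN_aMat (T := T) (T' := T') hsub
  have h2 := NN_rsMat (T := T) (T' := T')
  rw [epsMat, ZP_add, ZP_add, ZP_mul h1 h2, ZP_mul h2 h1, ZP_mul h1 h1,
    Z_aMat hsub htau, Z_rsMat, epsMat]

lemma coeff_eps_eq {i j k l : ℕ} (hi : i < n) (hj : j < n) (hk : k < n) (hl : l < n)
    (hpr' : prec T' (i, j) (k, l)) :
    coeffBA (epsMat T) (i, j) (k, l) = coeffBA (epsMat T') (i, j) (k, l) := by
  have hfw : fw T T' (i, j) = fw T T' (k, l) := fw_primed_eq hsub htau hpr'.choose_spec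
  simp only [fw] at hfw
  have hcond : k < n ∧ j < n ∧ l < n ∧ i < n := ⟨hk, hj, hl, hi⟩
  unfold coeffBA entry
  rw [dif_pos hcond, dif_pos hcond]
  have hz := congrFun (congrFun (Z_eps (T := T) (T' := T') hsub htau)
    (⟨k, hcond.1⟩, ⟨j, hcond.2.1⟩)) (⟨l, hcond.2.2.1⟩, ⟨i, hcond.2.2.2⟩)
  rw [← hz, ZP, if_pos]
  simp only [WW, wt2]
  omega

omit hsub htau in
lemma NN_wedgeC (q : ℝ) (c : ℂ) {i j k l : ℕ}
    (h : lamw T T' i + lamw T T' l ≤ lamw T T' j + lamw T T' k) :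
    NNP (WW T T') (wedgeC q c ((i, j) : ℕ × ℕ) ((k, l) : ℕ × ℕ)) := by
  rw [wedgeC]
  apply NNP_sub
  · exact NNP_smul _ (NN_tensE _ (by dsimp only; omega))
  · exact NNP_smul _ (NN_tensE _ (by dsimp only; omega))

omit hsub htau in
lemma Z_wedgeC_eq (q : ℝ) (c : ℂ) {i j k l : ℕ}
    (h : lamw T T' i + lamw T T' l = lamw T T' j + lamw T T' k) :
    ZP (WW T T') (wedgeC q c ((i, j) : ℕ × ℕ) ((k, l) : ℕ × ℕ))
      = wedgeC q c ((i, j) : ℕ × ℕ) ((k, l) : ℕ × ℕ) := by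
  rw [wedgeC, ZP_sub, ZP_smul, ZP_smul]
  dsimp only
  rw [Z_tensE_eq _ (by omega), Z_tensE_eq _ (by omega)]

omit hsub htau in
lemma Z_wedgeC_ne (q : ℝ) (c : ℂ) {i j k l : ℕ}
    (h : ¬ (lamw T T' i + lamw T T' l = lamw T T' j + lamw T T' k)) :
    ZP (WW T T') (wedgeC q c ((i, j) : ℕ × ℕ) ((k, l) : ℕ × ℕ)) = 0 := by
  rw [wedgeC, ZP_sub, ZP_smul, ZP_smul]
  dsimp only
  rw [Z_tensE_ne _ (by omega), Z_tensE_ne _ (by omega)]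
  simp

lemma NN_RbarGGS (q : ℝ) : NNP (WW T T') (RbarGGS q T) := by
  apply NNP_add (NN_RsQ q)
  apply NNP_smul
  apply NNP_sumRoots
  intro i _ j _ k _ l _
  by_cases hpr : prec T (i, j) (k, l)
  · rw [if_pos hpr]
    have hle : lamw T T' i - lamw T T' j ≤ lamw T T' k - lamw T T' l :=
      prec_fw_le (T' := T') hsub hpr
    exact NNP_smul _ (NN_wedgeC _ _ (by omega))
  · rw [if_neg hpr]
    exact NNP_zero

lemma Z_RbarGGS (q : ℝ) : ZP (WW T T') (RbarGGS q T) = RbarGGS q T' := by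
  rw [RbarGGS, RbarGGS, ZP_add, Z_RsQ, ZP_smul]
  congr 2
  apply ZP_sumRoots
  intro i hi j hj k hk l hl
  rw [Finset.mem_range] at hi hj hk hl
  by_cases hpr : prec T (i, j) (k, l)
  · by_cases hpr' : prec T' (i, j) (k, l)
    · have hfw : lamw T T' i - lamw T T' j = lamw T T' k - lamw T T' l :=
        (prec_fw_iff hsub htau hpr).mpr hpr'
      rw [if_pos hpr, if_pos hpr', sgn_eq hsub htau hpr',
        coeff_eps_eq hsub htau hi hj hk hl hpr', ZP_smul,
        Z_wedgeC_eq _ _ (by omega)]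
    · have hfw : ¬ (lamw T T' i - lamw T T' j = lamw T T' k - lamw T T' l) :=
        fun hc => hpr' ((prec_fw_iff hsub htau hpr).mp hc)
      rw [if_pos hpr, if_neg hpr', ZP_smul, Z_wedgeC_ne _ _ (by omega)]
      simp
  · rw [if_neg hpr, if_neg (fun hc => hpr (prec_lift hsub htau hc)), ZP_zero]

lemma NN_Jlevel (q : ℝ) (i : ℕ) : NNP (WW T T') (Jlevel q T (i + 1)) := by
  apply NNP_add NNP_one
  apply NNP_sumRoots
  intro a _ b _ c _ d _
  by_cases hpk : precK T (i + 1) (a, b) (c, d)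
  · rw [if_pos hpk]
    have hle : lamw T T' a - lamw T T' b ≤ lamw T T' c - lamw T T' d :=
      fw_chain_le (T' := T') hsub hpk
    apply NNP_smul
    dsimp only
    exact NN_tensE _ (by omega)
  · rw [if_neg hpk]
    exact NNP_zero

lemma Z_Jlevel (q : ℝ) (i : ℕ) :
    ZP (WW T T') (Jlevel q T (i + 1)) = Jlevel q T' (i + 1) := by
  rw [Jlevel, Jlevel, ZP_add, ZP_one]
  congr 1
  apply ZP_sumRoots
  intro a _ b _ c _ d _
  dsimp only
  by_cases hpk : precK T (i + 1) (a, b) (c, d)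
  · by_cases hpk' : precK T' (i + 1) (a, b) (c, d)
    · have hpr' : prec T' (a, b) (c, d) := ⟨i, hpk'⟩
      have hfw : lamw T T' a - lamw T T' b = lamw T T' c - lamw T T' d :=
        fw_primed_eq hsub htau hpk'
      rw [if_pos hpk, if_pos hpk', sgn_eq hsub htau hpr', kc_eq hsub htau hpr', ZP_smul,
        Z_tensE_eq _ (by omega)]
    · have hfw : ¬ (lamw T T' a - lamw T T' b = lamw T T' c - lamw T T' d) :=
        fun hc => hpk' ((precK_fw_iff hsub htau hpk).mp hc)
      rw [if_pos hpk, if_neg hpk', ZP_smul, Z_tensE_ne _ (by omega)]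
      simp
  · rw [if_neg hpk, if_neg (fun hc => hpk (precK_lift hsub htau hc)), ZP_zero]

lemma NN_Jmat (q : ℝ) : NNP (WW T T') (Jmat q T) := by
  apply NNP_listProd
  intro A hA
  rw [List.mem_map] at hA
  obtain ⟨i, -, rfl⟩ := hA
  exact NN_Jlevel hsub htau q i

lemma Z_Jmat (q : ℝ) : ZP (WW T T') (Jmat q T) = Jmat q T' := by
  rw [Jmat, ZP_listProd _ ?h, List.map_map, Jmat]
  case h =>
    intro A hA
    rw [List.mem_map] at hA
    obtain ⟨i, -, rfl⟩ := hA
    exact NN_Jlevel hsub htau q i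
  congr 1
  apply List.map_congr_left
  intro i _
  exact Z_Jlevel hsub htau q i

omit hsub htau

lemma Tgt_smul {A : MatT n} (c : ℂ) (hA : Tgt A) : Tgt (c • A) := by
  intro p q h
  exact hA p q fun h0 => h (by simp [Matrix.smul_apply, h0])

lemma Tgt_sum {α : Type*} {s : Finset α} {f : α → MatT n} (h : ∀ a ∈ s, Tgt (f a)) :
    Tgt (∑ a ∈ s, f a) := by
  classical
  induction s using Finset.induction_on with
  | empty => simpa using Tgt_zero
  | insert _ _ hx ih =>
      rw [Finset.sum_insert hx]
      exact Tgt_add (h _ (Finset.mem_insert_self _ _))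
        (ih fun a ha => h a (Finset.mem_insert_of_mem ha))

lemma Tgt_tensE {a b c d : ℕ} (h : d < c) : Tgt (tens (E n a b) (E n c d)) := by
  intro p q hne
  rw [tensE_apply] at hne
  split at hne
  case isTrue h' =>
    obtain ⟨-, h3, h4⟩ := h'
    omega
  case isFalse => exact absurd rfl hne

lemma Tgt_Jmat (q : ℝ) (T : BDTriple n) : Tgt (Jmat q T - 1) := by
  apply Tgt_prod_sub_one
  intro A hA
  rw [List.mem_map] at hA
  obtain ⟨i, -, rfl⟩ := hA
  rw [Jlevel, add_sub_cancel_left]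
  apply Tgt_sum; intro a _
  apply Tgt_sum; intro b _
  apply Tgt_sum; intro c _
  apply Tgt_sum; intro d _
  dsimp only
  by_cases hpk : precK T (i + 1) (a, b) (c, d)
  · rw [if_pos hpk]
    have hspan : SpanRoot T (a, b).1 (a, b).2 := precK_span (by omega) hpk
    exact Tgt_smul _ (Tgt_tensE hspan.1)
  · rw [if_neg hpk]
    exact Tgt_zero

end Concrete



section Final
variable {n : ℕ} {T T' : BDTriple n}
variable (hsub : T'.Γ1 ⊆ T.Γ1) (htau : ∀ s ∈ T'.Γ1, T'.τ s = T.τ s)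
include hsub htau

lemma NN_RGGS (q : ℝ) (r0 : ℕ → ℕ → ℂ) : NNP (WW T T') (RGGS q T r0) :=
  NNP_mul (NNP_mul (NN_qr0 q r0) (NN_RbarGGS hsub htau q)) (NN_qr0 q r0)

lemma Z_RGGS (q : ℝ) (r0 : ℕ → ℕ → ℂ) :
    ZP (WW T T') (RGGS q T r0) = RGGS q T' r0 := by
  rw [RGGS, ZP_mul (NNP_mul (NN_qr0 q r0) (NN_RbarGGS hsub htau q)) (NN_qr0 q r0),
    ZP_mul (NN_qr0 q r0) (NN_RbarGGS hsub htau q), Z_qr0, Z_RbarGGS hsub htau, RGGS]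

lemma inv_facts (q : ℝ) :
    NNP (WW T T') ((Jmat q T)⁻¹) ∧ ZP (WW T T') ((Jmat q T)⁻¹) = (Jmat q T')⁻¹ := by
  obtain ⟨h1, h2⟩ := unipotent_inv (Tgt_Jmat q T)
  have hNNJ : NNP (WW T T') (Jmat q T) := NN_Jmat hsub htau q
  have hNNB : NNP (WW T T') (∑ k ∈ range n, (1 - Jmat q T) ^ k) :=
    NNP_sum fun k _ => NNP_pow (NNP_sub NNP_one hNNJ) k
  have hinvJ : (Jmat q T)⁻¹ = ∑ k ∈ range n, (1 - Jmat q T) ^ k :=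
    Matrix.inv_eq_right_inv h1
  have e1 : Jmat q T' * ZP (WW T T') (∑ k ∈ range n, (1 - Jmat q T) ^ k) = 1 := by
    rw [← Z_Jmat hsub htau, ← ZP_mul hNNJ hNNB, h1, ZP_one]
  have hinvJ' : (Jmat q T')⁻¹ = ZP (WW T T') (∑ k ∈ range n, (1 - Jmat q T) ^ k) :=
    Matrix.inv_eq_right_inv e1
  rw [hinvJ, hinvJ']
  exact ⟨hNNB, rfl⟩

lemma NN_RbarJ (q : ℝ) : NNP (WW T T') (RbarJ q T) := by
  rw [RbarJ]
  exact NNP_mul (NNP_mul (inv_facts hsub htau q).1 (NN_RsQ q))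
    (NNP_swap _ (NN_Jmat hsub htau q))

lemma Z_RbarJ (q : ℝ) : ZP (WW T T') (RbarJ q T) = RbarJ q T' := by
  rw [RbarJ,
    ZP_mul (NNP_mul (inv_facts hsub htau q).1 (NN_RsQ q))
      (NNP_swap _ (NN_Jmat hsub htau q)),
    ZP_mul (inv_facts hsub htau q).1 (NN_RsQ q),
    (inv_facts hsub htau q).2, Z_RsQ, ZP_swap, Z_Jmat hsub htau, RbarJ]

lemma NN_RJ (q : ℝ) (r0 : ℕ → ℕ → ℂ) : NNP (WW T T') (RJ q T r0) :=
  NNP_mul (NNP_mul (NN_qr0 q r0) (NN_RbarJ hsub htau q)) (NN_qr0 q r0)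

lemma Z_RJ (q : ℝ) (r0 : ℕ → ℕ → ℂ) :
    ZP (WW T T') (RJ q T r0) = RJ q T' r0 := by
  rw [RJ, ZP_mul (NNP_mul (NN_qr0 q r0) (NN_RbarJ hsub htau q)) (NN_qr0 q r0),
    ZP_mul (NN_qr0 q r0) (NN_RbarJ hsub htau q), Z_qr0, Z_RbarJ hsub htau, RJ]

end Final


/-- reduction of the GGS and twist conjectures to maximal triples. -/
theorem stmt_6 {n : ℕ} (hn : 2 ≤ n) (q : ℝ) (hq : 0 < q) (hq1 : q ≠ 1)
    (T T' : BDTriple n) (hsub : T'.Γ1 ⊆ T.Γ1) (htau : ∀ s ∈ T'.Γ1, T'.τ s = T.τ s)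
    (r0 : ℕ → ℕ → ℂ) (hanti : Antisym n r0) (hcompat : Compat T r0) :
    Compat T' r0 ∧
    ((QYBE (RGGS q T r0) ∧ Hecke q (RGGS q T r0)) →
      QYBE (RGGS q T' r0) ∧ Hecke q (RGGS q T' r0)) ∧
    ((QYBE (RJ q T r0) ∧ RJ q T r0 = RGGS q T r0) →
      QYBE (RJ q T' r0) ∧ RJ q T' r0 = RGGS q T' r0) := by
  refine ⟨?_, ?_, ?_⟩
  · intro s hs j hj
    rw [htau s hs]
    exact hcompat s (hsub hs) j hj
  · rintro ⟨hybe, hhecke⟩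
    constructor
    · rw [← Z_RGGS hsub htau q r0]
      exact QYBE_proj _ (NN_RGGS hsub htau q r0) hybe
    · rw [← Z_RGGS hsub htau q r0]
      exact Hecke_proj _ q (NN_RGGS hsub htau q r0) hhecke
  · rintro ⟨hybe, heq⟩
    constructor
    · rw [← Z_RJ hsub htau q r0]
      exact QYBE_proj _ (NN_RJ hsub htau q r0) hybe
    · have := congrArg (ZP (WW T T')) heq
      rwa [Z_RJ hsub htau q r0, Z_RGGS hsub htau q r0] at this

end
end GGS
end
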